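/- Let H be a Hopf algebroid with non-degenerate right integral i, and define the convolution product h₁ ∗ h₂ = {}_Li({}_Li⁻¹(h₁) · {}_Li⁻¹(h₂)) on the additive group of H and the unit map η : R → H, r ↦ i s_R(r). Then (H_H, ∗, η, γ_R, π_R) is a Frobenius algebra in the monoidal category M_H of right H-modules: (H_H, ∗, η) is a monoid, (H_H, γ_R, π_R) is a comonoid, and γ_R(h ∗ k) = h⁽¹⁾ ⊗ (h⁽²⁾ ∗ k) = (h ∗ k⁽¹⁾) ⊗ k⁽²⁾. -/
import Mathlib


universe u

/-- A Böhm–Szlachányi Hopf algebroid with total ring `A`, left bialgebroid structure over `L`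
and right bialgebroid structure over `R`.  The coproducts `γ_L(a) = ∑ᵢ c1 a i ⊗ c2 a i`
(`i < nL a`) and `γ_R(a) = ∑ᵢ d1 a i ⊗ d2 a i` (`i < nR a`) are recorded by chosen
representatives; all identities involving them are stated by evaluation against arbitrary
balanced biadditive maps, which is exactly equality in the corresponding tensor product
over the (non-commutative) base ring.  Multiplication in `A` is written in the same order
as in the paper. -/
structure HopfAlgebroidData (A L R : Type u) [Ring A] [Ring L] [Ring R] where
  sL : L → A
  tL : L → A
  sR : R → A
  tR : R → A
  sL_one : sL 1 = 1
  sL_add : ∀ x y, sL (x + y) = sL x + sL y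
  sL_mul : ∀ x y, sL (x * y) = sL x * sL y
  tL_one : tL 1 = 1
  tL_add : ∀ x y, tL (x + y) = tL x + tL y
  tL_mul : ∀ x y, tL (x * y) = tL y * tL x
  sR_one : sR 1 = 1
  sR_add : ∀ x y, sR (x + y) = sR x + sR y
  sR_mul : ∀ x y, sR (x * y) = sR x * sR y
  tR_one : tR 1 = 1
  tR_add : ∀ x y, tR (x + y) = tR x + tR y
  tR_mul : ∀ x y, tR (x * y) = tR y * tR x
  commL : ∀ l l', sL l * tL l' = tL l' * sL l
  commR : ∀ r r', sR r * tR r' = tR r' * sR r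
  /-- number of terms of `γ_L a` -/
  nL : A → ℕ
  c1 : A → ℕ → A
  c2 : A → ℕ → A
  πL : A → L
  /-- number of terms of `γ_R a` -/
  nR : A → ℕ
  d1 : A → ℕ → A
  d2 : A → ℕ → A
  πR : A → R
  S : A → A
  Sinv : A → A
  -- `γ_L` is additive, a bimodule map `_L A _L → A_L ⊗_L {}_L A`
  -- (with `l·a·l' = sL l * tL l' * a`, balanced maps satisfy `f (tL l * u) v = f u (sL l * v)`)
  comulL_add : ∀ {M : Type u} [AddCommGroup M] (f : A → A → M),
    (∀ u u' v, f (u + u') v = f u v + f u' v) →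
    (∀ u v v', f u (v + v') = f u v + f u v') →
    (∀ l u v, f (tL l * u) v = f u (sL l * v)) →
    ∀ a b, (∑ i ∈ Finset.range (nL (a + b)), f (c1 (a + b) i) (c2 (a + b) i)) =
      (∑ i ∈ Finset.range (nL a), f (c1 a i) (c2 a i)) +
      (∑ i ∈ Finset.range (nL b), f (c1 b i) (c2 b i))
  comulL_bimod : ∀ {M : Type u} [AddCommGroup M] (f : A → A → M),
    (∀ u u' v, f (u + u') v = f u v + f u' v) →
    (∀ u v v', f u (v + v') = f u v + f u v') →
    (∀ l u v, f (tL l * u) v = f u (sL l * v)) →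
    ∀ (l l' : L) a,
      (∑ i ∈ Finset.range (nL (sL l * tL l' * a)),
        f (c1 (sL l * tL l' * a) i) (c2 (sL l * tL l' * a) i)) =
      (∑ i ∈ Finset.range (nL a), f (sL l * c1 a i) (tL l' * c2 a i))
  comulL_coassoc : ∀ {M : Type u} [AddCommGroup M] (g : A → A → A → M),
    (∀ u u' v w, g (u + u') v w = g u v w + g u' v w) →
    (∀ u v v' w, g u (v + v') w = g u v w + g u v' w) →
    (∀ u v w w', g u v (w + w') = g u v w + g u v w') →
    (∀ l u v w, g (tL l * u) v w = g u (sL l * v) w) →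
    (∀ l u v w, g u (tL l * v) w = g u v (sL l * w)) →
    ∀ a, (∑ i ∈ Finset.range (nL a), ∑ j ∈ Finset.range (nL (c1 a i)),
        g (c1 (c1 a i) j) (c2 (c1 a i) j) (c2 a i)) =
      (∑ i ∈ Finset.range (nL a), ∑ j ∈ Finset.range (nL (c2 a i)),
        g (c1 a i) (c1 (c2 a i) j) (c2 (c2 a i) j))
  comulL_takeuchi : ∀ {M : Type u} [AddCommGroup M] (f : A → A → M),
    (∀ u u' v, f (u + u') v = f u v + f u' v) →
    (∀ u v v', f u (v + v') = f u v + f u v') →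
    (∀ l u v, f (tL l * u) v = f u (sL l * v)) →
    ∀ (l : L) a, (∑ i ∈ Finset.range (nL a), f (c1 a i * tL l) (c2 a i)) =
      (∑ i ∈ Finset.range (nL a), f (c1 a i) (c2 a i * sL l))
  comulL_one : ∀ {M : Type u} [AddCommGroup M] (f : A → A → M),
    (∀ u u' v, f (u + u') v = f u v + f u' v) →
    (∀ u v v', f u (v + v') = f u v + f u v') →
    (∀ l u v, f (tL l * u) v = f u (sL l * v)) →
    (∑ i ∈ Finset.range (nL 1), f (c1 1 i) (c2 1 i)) = f 1 1
  comulL_mul : ∀ {M : Type u} [AddCommGroup M] (f : A → A → M),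
    (∀ u u' v, f (u + u') v = f u v + f u' v) →
    (∀ u v v', f u (v + v') = f u v + f u v') →
    (∀ l u v, f (tL l * u) v = f u (sL l * v)) →
    ∀ a b, (∑ i ∈ Finset.range (nL (a * b)), f (c1 (a * b) i) (c2 (a * b) i)) =
      (∑ i ∈ Finset.range (nL a), ∑ j ∈ Finset.range (nL b),
        f (c1 a i * c1 b j) (c2 a i * c2 b j))
  πL_one : πL 1 = 1
  πL_add : ∀ a b, πL (a + b) = πL a + πL b
  counitL_left : ∀ a, (∑ i ∈ Finset.range (nL a), sL (πL (c1 a i)) * c2 a i) = a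
  counitL_right : ∀ a, (∑ i ∈ Finset.range (nL a), tL (πL (c2 a i)) * c1 a i) = a
  πL_runit : ∀ a b, πL (a * sL (πL b)) = πL (a * b)
  πL_runit' : ∀ a b, πL (a * tL (πL b)) = πL (a * b)
  -- right bialgebroid data (`r·a·r' = a * sR r' * tR r`, balanced maps satisfy
  -- `f (u * sR r) v = f u (v * tR r)`)
  comulR_add : ∀ {M : Type u} [AddCommGroup M] (f : A → A → M),
    (∀ u u' v, f (u + u') v = f u v + f u' v) →
    (∀ u v v', f u (v + v') = f u v + f u v') →
    (∀ r u v, f (u * sR r) v = f u (v * tR r)) →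
    ∀ a b, (∑ i ∈ Finset.range (nR (a + b)), f (d1 (a + b) i) (d2 (a + b) i)) =
      (∑ i ∈ Finset.range (nR a), f (d1 a i) (d2 a i)) +
      (∑ i ∈ Finset.range (nR b), f (d1 b i) (d2 b i))
  comulR_bimod : ∀ {M : Type u} [AddCommGroup M] (f : A → A → M),
    (∀ u u' v, f (u + u') v = f u v + f u' v) →
    (∀ u v v', f u (v + v') = f u v + f u v') →
    (∀ r u v, f (u * sR r) v = f u (v * tR r)) →
    ∀ (r r' : R) a,
      (∑ i ∈ Finset.range (nR (a * sR r' * tR r)),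
        f (d1 (a * sR r' * tR r) i) (d2 (a * sR r' * tR r) i)) =
      (∑ i ∈ Finset.range (nR a), f (d1 a i * tR r) (d2 a i * sR r'))
  comulR_coassoc : ∀ {M : Type u} [AddCommGroup M] (g : A → A → A → M),
    (∀ u u' v w, g (u + u') v w = g u v w + g u' v w) →
    (∀ u v v' w, g u (v + v') w = g u v w + g u v' w) →
    (∀ u v w w', g u v (w + w') = g u v w + g u v w') →
    (∀ r u v w, g (u * sR r) v w = g u (v * tR r) w) →
    (∀ r u v w, g u (v * sR r) w = g u v (w * tR r)) →
    ∀ a, (∑ i ∈ Finset.range (nR a), ∑ j ∈ Finset.range (nR (d1 a i)),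
        g (d1 (d1 a i) j) (d2 (d1 a i) j) (d2 a i)) =
      (∑ i ∈ Finset.range (nR a), ∑ j ∈ Finset.range (nR (d2 a i)),
        g (d1 a i) (d1 (d2 a i) j) (d2 (d2 a i) j))
  comulR_takeuchi : ∀ {M : Type u} [AddCommGroup M] (f : A → A → M),
    (∀ u u' v, f (u + u') v = f u v + f u' v) →
    (∀ u v v', f u (v + v') = f u v + f u v') →
    (∀ r u v, f (u * sR r) v = f u (v * tR r)) →
    ∀ (r : R) a, (∑ i ∈ Finset.range (nR a), f (sR r * d1 a i) (d2 a i)) =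
      (∑ i ∈ Finset.range (nR a), f (d1 a i) (tR r * d2 a i))
  comulR_one : ∀ {M : Type u} [AddCommGroup M] (f : A → A → M),
    (∀ u u' v, f (u + u') v = f u v + f u' v) →
    (∀ u v v', f u (v + v') = f u v + f u v') →
    (∀ r u v, f (u * sR r) v = f u (v * tR r)) →
    (∑ i ∈ Finset.range (nR 1), f (d1 1 i) (d2 1 i)) = f 1 1
  comulR_mul : ∀ {M : Type u} [AddCommGroup M] (f : A → A → M),
    (∀ u u' v, f (u + u') v = f u v + f u' v) →
    (∀ u v v', f u (v + v') = f u v + f u v') →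
    (∀ r u v, f (u * sR r) v = f u (v * tR r)) →
    ∀ a b, (∑ i ∈ Finset.range (nR (a * b)), f (d1 (a * b) i) (d2 (a * b) i)) =
      (∑ i ∈ Finset.range (nR a), ∑ j ∈ Finset.range (nR b),
        f (d1 a i * d1 b j) (d2 a i * d2 b j))
  πR_one : πR 1 = 1
  πR_add : ∀ a b, πR (a + b) = πR a + πR b
  counitR_left : ∀ a, (∑ i ∈ Finset.range (nR a), d1 a i * sR (πR (d2 a i))) = a
  counitR_right : ∀ a, (∑ i ∈ Finset.range (nR a), d2 a i * tR (πR (d1 a i))) = a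
  πR_lunit : ∀ a b, πR (sR (πR a) * b) = πR (a * b)
  πR_lunit' : ∀ a b, πR (tR (πR a) * b) = πR (a * b)
  -- Hopf algebroid axioms
  range_sL_tR : Set.range sL = Set.range tR
  range_tL_sR : Set.range tL = Set.range sR
  mixed₁ : ∀ {M : Type u} [AddCommGroup M] (g : A → A → A → M),
    (∀ u u' v w, g (u + u') v w = g u v w + g u' v w) →
    (∀ u v v' w, g u (v + v') w = g u v w + g u v' w) →
    (∀ u v w w', g u v (w + w') = g u v w + g u v w') →
    (∀ l u v w, g (tL l * u) v w = g u (sL l * v) w) →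
    (∀ r u v w, g u (v * sR r) w = g u v (w * tR r)) →
    ∀ a, (∑ i ∈ Finset.range (nR a), ∑ j ∈ Finset.range (nL (d1 a i)),
        g (c1 (d1 a i) j) (c2 (d1 a i) j) (d2 a i)) =
      (∑ i ∈ Finset.range (nL a), ∑ j ∈ Finset.range (nR (c2 a i)),
        g (c1 a i) (d1 (c2 a i) j) (d2 (c2 a i) j))
  mixed₂ : ∀ {M : Type u} [AddCommGroup M] (g : A → A → A → M),
    (∀ u u' v w, g (u + u') v w = g u v w + g u' v w) →
    (∀ u v v' w, g u (v + v') w = g u v w + g u v' w) →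
    (∀ u v w w', g u v (w + w') = g u v w + g u v w') →
    (∀ r u v w, g (u * sR r) v w = g u (v * tR r) w) →
    (∀ l u v w, g u (tL l * v) w = g u v (sL l * w)) →
    ∀ a, (∑ i ∈ Finset.range (nL a), ∑ j ∈ Finset.range (nR (c1 a i)),
        g (d1 (c1 a i) j) (d2 (c1 a i) j) (c2 a i)) =
      (∑ i ∈ Finset.range (nR a), ∑ j ∈ Finset.range (nL (d2 a i)),
        g (d1 a i) (c1 (d2 a i) j) (c2 (d2 a i) j))
  S_add : ∀ a b, S (a + b) = S a + S b
  S_leftinv : ∀ a, Sinv (S a) = a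
  S_rightinv : ∀ a, S (Sinv a) = a
  S_twistL : ∀ l l' a, S (tL l * a * tL l') = sL l' * S a * sL l
  S_twistR : ∀ r r' a, S (tR r' * a * tR r) = sR r * S a * sR r'
  antipode_L : ∀ a, (∑ i ∈ Finset.range (nL a), S (c1 a i) * c2 a i) = sR (πR a)
  antipode_R : ∀ a, (∑ i ∈ Finset.range (nR a), d1 a i * S (d2 a i)) = sL (πL a)


namespace HopfAlgebroidData

variable {A L R : Type u} [Ring A] [Ring L] [Ring R] (H : HopfAlgebroidData A L R)

/-- The left `L`-dual `{}_*H` of `{}_L H` (maps `{}_L A → {}_L L`). -/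
def LStarDual : Type u :=
  {φ : A → L // (∀ x y, φ (x + y) = φ x + φ y) ∧ ∀ l x, φ (H.sL l * x) = l * φ x}

/-- The right `L`-dual `H_*` of `H_L` (maps `A_L → L_L`). -/
def StarLDual : Type u :=
  {φ : A → L // (∀ x y, φ (x + y) = φ x + φ y) ∧ ∀ l x, φ (H.tL l * x) = φ x * l}

/-- The map `{}_L i : {}_*H → H`, `φ ↦ i ⇁ φ = t_L(φ(i₍₂₎)) i₍₁₎`. -/
def intMapL (i : A) : H.LStarDual → A :=
  fun φ => ∑ k ∈ Finset.range (H.nL i), H.tL (φ.1 (H.c2 i k)) * H.c1 i k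

/-- The map `i_L : H_* → H`, `φ ↦ i ↼ φ = s_L(φ(i₍₁₎)) i₍₂₎`. -/
def intMapR (i : A) : H.StarLDual → A :=
  fun φ => ∑ k ∈ Finset.range (H.nL i), H.sL (φ.1 (H.c1 i k)) * H.c2 i k

/-- The convolution product `h ∗ k = t_L(ρ(h₍₂₎ S(k))) h₍₁₎`, where `ρ = {}_L i⁻¹(1)`. -/
def hconv (ρ : A → L) (h k : A) : A :=
  ∑ j ∈ Finset.range (H.nL h), H.tL (ρ (H.c2 h j * H.S k)) * H.c1 h j

/-- The unit map `η : R → H`, `r ↦ i s_R(r)` of the convolution algebra. -/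
def heta (i : A) (r : R) : A := i * H.sR r

end HopfAlgebroidData

namespace HopfAlgebroidData

variable {A L R : Type u} [Ring A] [Ring L] [Ring R] (H : HopfAlgebroidData A L R)

lemma addf_zero {M : Type u} [AddCommGroup M] {f : A → M}
    (hf : ∀ x y, f (x + y) = f x + f y) : f 0 = 0 := by
  have h := hf 0 0
  rw [add_zero] at h
  exact left_eq_add.mp h

lemma addf_sum {M : Type u} [AddCommGroup M] {f : A → M}
    (hf : ∀ x y, f (x + y) = f x + f y) (s : Finset ℕ) (g : ℕ → A) :
    f (∑ x ∈ s, g x) = ∑ x ∈ s, f (g x) :=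
  map_sum (AddMonoidHom.mk' f hf) _ _

lemma S_mul_tL_left (l : L) (x : A) : H.S (H.tL l * x) = H.S x * H.sL l := by
  have h := H.S_twistL l 1 x
  rwa [H.tL_one, mul_one, H.sL_one, one_mul] at h

lemma S_mul_tL_right (l : L) (x : A) : H.S (x * H.tL l) = H.sL l * H.S x := by
  have h := H.S_twistL 1 l x
  rwa [H.tL_one, one_mul, H.sL_one, mul_one] at h

lemma S_mul_tR_right (r : R) (x : A) : H.S (x * H.tR r) = H.sR r * H.S x := by
  have h := H.S_twistR r 1 x
  rwa [H.tR_one, one_mul, H.sR_one, mul_one] at h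

lemma S_mul_tR_left (r : R) (x : A) : H.S (H.tR r * x) = H.S x * H.sR r := by
  have h := H.S_twistR 1 r x
  rwa [H.tR_one, mul_one, H.sR_one, one_mul] at h

lemma exists_tL_eq_sR (r : R) : ∃ l, H.tL l = H.sR r := by
  have : H.sR r ∈ Set.range H.tL := by rw [H.range_tL_sR]; exact ⟨r, rfl⟩
  exact this

lemma exists_sR_eq_tL (l : L) : ∃ r, H.sR r = H.tL l := by
  have : H.tL l ∈ Set.range H.sR := by rw [← H.range_tL_sR]; exact ⟨l, rfl⟩
  exact this

lemma exists_tR_eq_sL (l : L) : ∃ r, H.tR r = H.sL l := by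
  have : H.sL l ∈ Set.range H.tR := by rw [← H.range_sL_tR]; exact ⟨l, rfl⟩
  exact this

lemma lsum_zero (f : A → A → A)
    (hf1 : ∀ u u' v, f (u + u') v = f u v + f u' v)
    (hf2 : ∀ u v v', f u (v + v') = f u v + f u v')
    (hf3 : ∀ l u v, f (H.tL l * u) v = f u (H.sL l * v)) :
    (∑ j ∈ Finset.range (H.nL 0), f (H.c1 0 j) (H.c2 0 j)) = 0 := by
  have h := H.comulL_add f hf1 hf2 hf3 0 0
  rw [add_zero] at h
  exact left_eq_add.mp h

lemma lsum_sum (f : A → A → A)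
    (hf1 : ∀ u u' v, f (u + u') v = f u v + f u' v)
    (hf2 : ∀ u v v', f u (v + v') = f u v + f u v')
    (hf3 : ∀ l u v, f (H.tL l * u) v = f u (H.sL l * v))
    (s : Finset ℕ) (g : ℕ → A) :
    (∑ j ∈ Finset.range (H.nL (∑ t ∈ s, g t)),
      f (H.c1 (∑ t ∈ s, g t) j) (H.c2 (∑ t ∈ s, g t) j)) =
    ∑ t ∈ s, ∑ j ∈ Finset.range (H.nL (g t)), f (H.c1 (g t) j) (H.c2 (g t) j) := by
  classical
  induction s using Finset.cons_induction with
  | empty => simpa using H.lsum_zero f hf1 hf2 hf3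
  | cons a s ha ih =>
      rw [Finset.sum_cons, Finset.sum_cons, H.comulL_add f hf1 hf2 hf3, ih]

lemma lsum_tL (f : A → A → A)
    (hf1 : ∀ u u' v, f (u + u') v = f u v + f u' v)
    (hf2 : ∀ u v v', f u (v + v') = f u v + f u v')
    (hf3 : ∀ l u v, f (H.tL l * u) v = f u (H.sL l * v))
    (l : L) (a : A) :
    (∑ j ∈ Finset.range (H.nL (H.tL l * a)),
      f (H.c1 (H.tL l * a) j) (H.c2 (H.tL l * a) j)) =
    ∑ j ∈ Finset.range (H.nL a), f (H.c1 a j) (H.tL l * H.c2 a j) := by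
  have h := H.comulL_bimod f hf1 hf2 hf3 1 l a
  rw [H.sL_one, one_mul] at h
  simpa [H.sL_one, one_mul] using h

lemma lsum_sL (f : A → A → A)
    (hf1 : ∀ u u' v, f (u + u') v = f u v + f u' v)
    (hf2 : ∀ u v v', f u (v + v') = f u v + f u v')
    (hf3 : ∀ l u v, f (H.tL l * u) v = f u (H.sL l * v))
    (l : L) (a : A) :
    (∑ j ∈ Finset.range (H.nL (H.sL l * a)),
      f (H.c1 (H.sL l * a) j) (H.c2 (H.sL l * a) j)) =
    ∑ j ∈ Finset.range (H.nL a), f (H.sL l * H.c1 a j) (H.c2 a j) := by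
  have h := H.comulL_bimod f hf1 hf2 hf3 l 1 a
  rw [H.tL_one, mul_one] at h
  simpa [H.tL_one, one_mul] using h

lemma lsum_mul_tL (f : A → A → A)
    (hf1 : ∀ u u' v, f (u + u') v = f u v + f u' v)
    (hf2 : ∀ u v v', f u (v + v') = f u v + f u v')
    (hf3 : ∀ l u v, f (H.tL l * u) v = f u (H.sL l * v))
    (l : L) (a : A) :
    (∑ j ∈ Finset.range (H.nL (a * H.tL l)),
      f (H.c1 (a * H.tL l) j) (H.c2 (a * H.tL l) j)) =
    ∑ j ∈ Finset.range (H.nL a), f (H.c1 a j) (H.c2 a j * H.tL l) := by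
  set F : A → A → A := fun α β =>
    ∑ j ∈ Finset.range (H.nL a), f (H.c1 a j * α) (H.c2 a j * β) with hFdef
  have hF1 : ∀ α α' β, F (α + α') β = F α β + F α' β := by
    intro α α' β
    simp only [hFdef, mul_add, hf1, Finset.sum_add_distrib]
  have hF2 : ∀ α β β', F α (β + β') = F α β + F α β' := by
    intro α β β'
    simp only [hFdef, mul_add, hf2, Finset.sum_add_distrib]
  have hF3 : ∀ m α β, F (H.tL m * α) β = F α (H.sL m * β) := by
    intro m α β
    have h := H.comulL_takeuchi (fun u v => f (u * α) (v * β))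
      (fun u u' v => by simp only [add_mul, hf1])
      (fun u v v' => by simp only [add_mul, hf2])
      (fun m' u v => by
        show f (H.tL m' * u * α) (v * β) = f (u * α) (H.sL m' * v * β)
        rw [mul_assoc, hf3, ← mul_assoc]) m a
    simp only [hFdef]
    calc (∑ j ∈ Finset.range (H.nL a), f (H.c1 a j * (H.tL m * α)) (H.c2 a j * β))
        = ∑ j ∈ Finset.range (H.nL a), f ((H.c1 a j * H.tL m) * α) (H.c2 a j * β) := by
          simp only [mul_assoc]
      _ = ∑ j ∈ Finset.range (H.nL a), f (H.c1 a j * α) ((H.c2 a j * H.sL m) * β) := h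
      _ = ∑ j ∈ Finset.range (H.nL a), f (H.c1 a j * α) (H.c2 a j * (H.sL m * β)) := by
          simp only [mul_assoc]
  have hmul := H.comulL_mul f hf1 hf2 hf3 a (H.tL l)
  rw [hmul, Finset.sum_comm]
  have honetL : (∑ t ∈ Finset.range (H.nL (H.tL l)), F (H.c1 (H.tL l) t) (H.c2 (H.tL l) t))
      = F 1 (H.tL l) := by
    have h := H.comulL_bimod F hF1 hF2 hF3 1 l 1
    rw [H.sL_one, one_mul, mul_one] at h
    rw [h]
    set G : A → A → A := fun α β => F α (H.tL l * β) with hGdef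
    have hG3 : ∀ m α β, G (H.tL m * α) β = G α (H.sL m * β) := by
      intro m α β
      simp only [hGdef]
      rw [hF3]
      congr 1
      rw [← mul_assoc, ← mul_assoc, H.commL]
    have hone := H.comulL_one G
      (fun u u' v => hF1 u u' _)
      (fun u v v' => by simp only [hGdef, mul_add, hF2])
      hG3
    calc (∑ t ∈ Finset.range (H.nL 1), F (1 * H.c1 1 t) (H.tL l * H.c2 1 t))
        = ∑ t ∈ Finset.range (H.nL 1), G (H.c1 1 t) (H.c2 1 t) := by
          simp only [hGdef, one_mul]
      _ = G 1 1 := hone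
      _ = F 1 (H.tL l) := by simp only [hGdef, mul_one]
  rw [honetL]
  simp only [hFdef, mul_one]

lemma lsum_mul_sR (f : A → A → A)
    (hf1 : ∀ u u' v, f (u + u') v = f u v + f u' v)
    (hf2 : ∀ u v v', f u (v + v') = f u v + f u v')
    (hf3 : ∀ l u v, f (H.tL l * u) v = f u (H.sL l * v))
    (r : R) (a : A) :
    (∑ j ∈ Finset.range (H.nL (a * H.sR r)),
      f (H.c1 (a * H.sR r) j) (H.c2 (a * H.sR r) j)) =
    ∑ j ∈ Finset.range (H.nL a), f (H.c1 a j) (H.c2 a j * H.sR r) := by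
  obtain ⟨l, hl⟩ := H.exists_tL_eq_sR r
  rw [← hl]
  exact H.lsum_mul_tL f hf1 hf2 hf3 l a

end HopfAlgebroidData
namespace HopfAlgebroidData

variable {A L R : Type u} [Ring A] [Ring L] [Ring R] (H : HopfAlgebroidData A L R)

lemma rsum_zero {M : Type u} [AddCommGroup M] (f : A → A → M)
    (hf1 : ∀ u u' v, f (u + u') v = f u v + f u' v)
    (hf2 : ∀ u v v', f u (v + v') = f u v + f u v')
    (hf3 : ∀ r u v, f (u * H.sR r) v = f u (v * H.tR r)) :
    (∑ j ∈ Finset.range (H.nR 0), f (H.d1 0 j) (H.d2 0 j)) = 0 := by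
  have h := H.comulR_add f hf1 hf2 hf3 0 0
  rw [add_zero] at h
  exact left_eq_add.mp h

lemma rsum_sum {M : Type u} [AddCommGroup M] (f : A → A → M)
    (hf1 : ∀ u u' v, f (u + u') v = f u v + f u' v)
    (hf2 : ∀ u v v', f u (v + v') = f u v + f u v')
    (hf3 : ∀ r u v, f (u * H.sR r) v = f u (v * H.tR r))
    (s : Finset ℕ) (g : ℕ → A) :
    (∑ j ∈ Finset.range (H.nR (∑ t ∈ s, g t)),
      f (H.d1 (∑ t ∈ s, g t) j) (H.d2 (∑ t ∈ s, g t) j)) =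
    ∑ t ∈ s, ∑ j ∈ Finset.range (H.nR (g t)), f (H.d1 (g t) j) (H.d2 (g t) j) := by
  classical
  induction s using Finset.cons_induction with
  | empty => simpa using H.rsum_zero f hf1 hf2 hf3
  | cons a s ha ih =>
      rw [Finset.sum_cons, Finset.sum_cons, H.comulR_add f hf1 hf2 hf3, ih]

/-- auxiliary: the "multiplied" pairing `F α β = ∑ f (α * d1 a q) (β * d2 a q)` is balanced. -/
lemma rsum_mulF_bal {M : Type u} [AddCommGroup M] (f : A → A → M)
    (hf1 : ∀ u u' v, f (u + u') v = f u v + f u' v)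
    (hf2 : ∀ u v v', f u (v + v') = f u v + f u v')
    (hf3 : ∀ r u v, f (u * H.sR r) v = f u (v * H.tR r))
    (a : A) (r' : R) (α β : A) :
    (∑ q ∈ Finset.range (H.nR a), f ((α * H.sR r') * H.d1 a q) (β * H.d2 a q)) =
    ∑ q ∈ Finset.range (H.nR a), f (α * H.d1 a q) ((β * H.tR r') * H.d2 a q) := by
  have h := H.comulR_takeuchi (fun γ δ => f (α * γ) (β * δ))
    (fun u u' v => by simp only [mul_add, hf1])
    (fun u v v' => by simp only [mul_add, hf2])
    (fun r'' u v => by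
      show f (α * (u * H.sR r'')) (β * v) = f (α * u) (β * (v * H.tR r''))
      rw [← mul_assoc, hf3, mul_assoc]) r' a
  calc (∑ q ∈ Finset.range (H.nR a), f ((α * H.sR r') * H.d1 a q) (β * H.d2 a q))
      = ∑ q ∈ Finset.range (H.nR a), f (α * (H.sR r' * H.d1 a q)) (β * H.d2 a q) := by
        simp only [mul_assoc]
    _ = ∑ q ∈ Finset.range (H.nR a), f (α * H.d1 a q) (β * (H.tR r' * H.d2 a q)) := h
    _ = ∑ q ∈ Finset.range (H.nR a), f (α * H.d1 a q) ((β * H.tR r') * H.d2 a q) := by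
        simp only [mul_assoc]

lemma rsum_tR_left {M : Type u} [AddCommGroup M] (f : A → A → M)
    (hf1 : ∀ u u' v, f (u + u') v = f u v + f u' v)
    (hf2 : ∀ u v v', f u (v + v') = f u v + f u v')
    (hf3 : ∀ r u v, f (u * H.sR r) v = f u (v * H.tR r))
    (r : R) (a : A) :
    (∑ j ∈ Finset.range (H.nR (H.tR r * a)),
      f (H.d1 (H.tR r * a) j) (H.d2 (H.tR r * a) j)) =
    ∑ j ∈ Finset.range (H.nR a), f (H.tR r * H.d1 a j) (H.d2 a j) := by
  set F : A → A → M := fun α β =>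
    ∑ q ∈ Finset.range (H.nR a), f (α * H.d1 a q) (β * H.d2 a q) with hFdef
  have hF1 : ∀ α α' β, F (α + α') β = F α β + F α' β := by
    intro α α' β
    simp only [hFdef, add_mul, hf1, Finset.sum_add_distrib]
  have hF2 : ∀ α β β', F α (β + β') = F α β + F α β' := by
    intro α β β'
    simp only [hFdef, add_mul, hf2, Finset.sum_add_distrib]
  have hF3 : ∀ r' α β, F (α * H.sR r') β = F α (β * H.tR r') := by
    intro r' α β
    exact H.rsum_mulF_bal f hf1 hf2 hf3 a r' α β
  have hmul := H.comulR_mul f hf1 hf2 hf3 (H.tR r) a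
  rw [hmul]
  have honetR : (∑ s ∈ Finset.range (H.nR (H.tR r)), F (H.d1 (H.tR r) s) (H.d2 (H.tR r) s))
      = F (H.tR r) 1 := by
    have h := H.comulR_bimod F hF1 hF2 hF3 r 1 1
    rw [H.sR_one, mul_one, one_mul] at h
    rw [h]
    set G : A → A → M := fun α β => F (α * H.tR r) β with hGdef
    have hG3 : ∀ r' α β, G (α * H.sR r') β = G α (β * H.tR r') := by
      intro r' α β
      simp only [hGdef]
      rw [mul_assoc, H.commR, ← mul_assoc, hF3]
    have hone := H.comulR_one G
      (fun u u' v => by simp only [hGdef, add_mul, hF1])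
      (fun u v v' => hF2 _ v v')
      hG3
    calc (∑ s ∈ Finset.range (H.nR 1), F (H.d1 1 s * H.tR r) (H.d2 1 s * 1))
        = ∑ s ∈ Finset.range (H.nR 1), G (H.d1 1 s) (H.d2 1 s) := by
          simp only [hGdef, mul_one]
      _ = G 1 1 := hone
      _ = F (H.tR r) 1 := by simp only [hGdef, one_mul]
  rw [honetR]
  simp only [hFdef, one_mul]

lemma rsum_sL_left {M : Type u} [AddCommGroup M] (f : A → A → M)
    (hf1 : ∀ u u' v, f (u + u') v = f u v + f u' v)
    (hf2 : ∀ u v v', f u (v + v') = f u v + f u v')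
    (hf3 : ∀ r u v, f (u * H.sR r) v = f u (v * H.tR r))
    (l : L) (a : A) :
    (∑ j ∈ Finset.range (H.nR (H.sL l * a)),
      f (H.d1 (H.sL l * a) j) (H.d2 (H.sL l * a) j)) =
    ∑ j ∈ Finset.range (H.nR a), f (H.sL l * H.d1 a j) (H.d2 a j) := by
  obtain ⟨r, hr⟩ := H.exists_tR_eq_sL l
  rw [← hr]
  exact H.rsum_tR_left f hf1 hf2 hf3 r a

lemma rsum_tL_left {M : Type u} [AddCommGroup M] (f : A → A → M)
    (hf1 : ∀ u u' v, f (u + u') v = f u v + f u' v)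
    (hf2 : ∀ u v v', f u (v + v') = f u v + f u v')
    (hf3 : ∀ r u v, f (u * H.sR r) v = f u (v * H.tR r))
    (l : L) (a : A) :
    (∑ j ∈ Finset.range (H.nR (H.tL l * a)),
      f (H.d1 (H.tL l * a) j) (H.d2 (H.tL l * a) j)) =
    ∑ j ∈ Finset.range (H.nR a), f (H.d1 a j) (H.tL l * H.d2 a j) := by
  obtain ⟨r, hr⟩ := H.exists_sR_eq_tL l
  rw [← hr]
  set F : A → A → M := fun α β =>
    ∑ q ∈ Finset.range (H.nR a), f (α * H.d1 a q) (β * H.d2 a q) with hFdef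
  have hF1 : ∀ α α' β, F (α + α') β = F α β + F α' β := by
    intro α α' β
    simp only [hFdef, add_mul, hf1, Finset.sum_add_distrib]
  have hF2 : ∀ α β β', F α (β + β') = F α β + F α β' := by
    intro α β β'
    simp only [hFdef, add_mul, hf2, Finset.sum_add_distrib]
  have hF3 : ∀ r' α β, F (α * H.sR r') β = F α (β * H.tR r') := by
    intro r' α β
    exact H.rsum_mulF_bal f hf1 hf2 hf3 a r' α β
  have hmul := H.comulR_mul f hf1 hf2 hf3 (H.sR r) a
  rw [hmul]
  have hone' : (∑ s ∈ Finset.range (H.nR (H.sR r)), F (H.d1 (H.sR r) s) (H.d2 (H.sR r) s))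
      = F 1 (H.sR r) := by
    have h := H.comulR_bimod F hF1 hF2 hF3 1 r 1
    rw [H.tR_one, mul_one, one_mul] at h
    rw [h]
    set G : A → A → M := fun α β => F α (β * H.sR r) with hGdef
    have hG3 : ∀ r' α β, G (α * H.sR r') β = G α (β * H.tR r') := by
      intro r' α β
      simp only [hGdef]
      rw [hF3, mul_assoc, H.commR, ← mul_assoc]
    have hone := H.comulR_one G
      (fun u u' v => hF1 u u' _)
      (fun u v v' => by simp only [hGdef, add_mul, hF2])
      hG3
    calc (∑ s ∈ Finset.range (H.nR 1), F (H.d1 1 s * 1) (H.d2 1 s * H.sR r))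
        = ∑ s ∈ Finset.range (H.nR 1), G (H.d1 1 s) (H.d2 1 s) := by
          simp only [hGdef, mul_one]
      _ = G 1 1 := hone
      _ = F 1 (H.sR r) := by simp only [hGdef, one_mul]
  rw [hone']
  simp only [hFdef, one_mul]

end HopfAlgebroidData
namespace HopfAlgebroidData

variable {A L R : Type u} [Ring A] [Ring L] [Ring R] (H : HopfAlgebroidData A L R)

/-- **(K)**: for a right integral `i`, `i₍₁₎ a ⊗ i₍₂₎ = i₍₁₎ ⊗ i₍₂₎ S(a)` in `H ⊗_L H`. -/
lemma K_lemma (i : A) (hri : ∀ a, i * a = i * H.sR (H.πR a))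
    (f : A → A → A)
    (hf1 : ∀ u u' v, f (u + u') v = f u v + f u' v)
    (hf2 : ∀ u v v', f u (v + v') = f u v + f u v')
    (hf3 : ∀ l u v, f (H.tL l * u) v = f u (H.sL l * v))
    (a : A) :
    (∑ k ∈ Finset.range (H.nL i), f (H.c1 i k * a) (H.c2 i k)) =
    ∑ k ∈ Finset.range (H.nL i), f (H.c1 i k) (H.c2 i k * H.S a) := by
  classical
  -- the master double-coproduct sum
  set U : A := ∑ j ∈ Finset.range (H.nL a), ∑ k ∈ Finset.range (H.nL i),
      ∑ q ∈ Finset.range (H.nR (H.c2 a j)),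
        f (H.c1 i k * H.c1 a j)
          (H.c2 i k * (H.d1 (H.c2 a j) q * H.S (H.d2 (H.c2 a j) q))) with hUdef
  -- Way 1 : U = LHS
  have way1 : U = ∑ k ∈ Finset.range (H.nL i), f (H.c1 i k * a) (H.c2 i k) := by
    have step1 : U = ∑ j ∈ Finset.range (H.nL a), ∑ k ∈ Finset.range (H.nL i),
        f (H.c1 i k * H.c1 a j) (H.c2 i k * H.sL (H.πL (H.c2 a j))) := by
      rw [hUdef]
      refine Finset.sum_congr rfl (fun j hj => Finset.sum_congr rfl (fun k hk => ?_))
      rw [← H.antipode_R (H.c2 a j), Finset.mul_sum,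
        addf_sum (f := f (H.c1 i k * H.c1 a j)) (fun v v' => hf2 _ v v')]
    have step2 : (∑ j ∈ Finset.range (H.nL a), ∑ k ∈ Finset.range (H.nL i),
        f (H.c1 i k * H.c1 a j) (H.c2 i k * H.sL (H.πL (H.c2 a j)))) =
        ∑ j ∈ Finset.range (H.nL a), ∑ k ∈ Finset.range (H.nL i),
        f (H.c1 i k * (H.tL (H.πL (H.c2 a j)) * H.c1 a j)) (H.c2 i k) := by
      refine Finset.sum_congr rfl (fun j hj => ?_)
      have h := H.comulL_takeuchi (fun u v => f (u * H.c1 a j) v)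
        (fun u u' v => by simp only [add_mul, hf1])
        (fun u v v' => by simp only [hf2])
        (fun l u v => by
          show f (H.tL l * u * H.c1 a j) v = f (u * H.c1 a j) (H.sL l * v)
          rw [mul_assoc, hf3]) (H.πL (H.c2 a j)) i
      calc (∑ k ∈ Finset.range (H.nL i),
              f (H.c1 i k * H.c1 a j) (H.c2 i k * H.sL (H.πL (H.c2 a j))))
          = ∑ k ∈ Finset.range (H.nL i),
              f (H.c1 i k * H.tL (H.πL (H.c2 a j)) * H.c1 a j) (H.c2 i k) := h.symm
        _ = ∑ k ∈ Finset.range (H.nL i),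
              f (H.c1 i k * (H.tL (H.πL (H.c2 a j)) * H.c1 a j)) (H.c2 i k) := by
            simp only [mul_assoc]
    rw [step1, step2, Finset.sum_comm]
    refine Finset.sum_congr rfl (fun k hk => ?_)
    rw [← addf_sum (f := fun x => f x (H.c2 i k)) (fun u u' => hf1 u u' _),
      ← Finset.mul_sum, H.counitL_right a]
  -- Way 2 : U = RHS
  have way2 : U = ∑ k ∈ Finset.range (H.nL i), f (H.c1 i k) (H.c2 i k * H.S a) := by
    set g : A → A → A → A := fun u α β => ∑ k ∈ Finset.range (H.nL i),
      f (H.c1 i k * u) (H.c2 i k * (α * H.S β)) with hgdef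
    have hU : U = ∑ j ∈ Finset.range (H.nL a), ∑ q ∈ Finset.range (H.nR (H.c2 a j)),
        g (H.c1 a j) (H.d1 (H.c2 a j) q) (H.d2 (H.c2 a j) q) := by
      rw [hUdef]
      exact Finset.sum_congr rfl (fun j hj => Finset.sum_comm)
    have hg1 : ∀ u u' α β, g (u + u') α β = g u α β + g u' α β := by
      intro u u' α β
      simp only [hgdef, mul_add, hf1, Finset.sum_add_distrib]
    have hg2 : ∀ u α α' β, g u (α + α') β = g u α β + g u α' β := by
      intro u α α' β
      simp only [hgdef, add_mul, mul_add, hf2, Finset.sum_add_distrib]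
    have hg3 : ∀ u α β β', g u α (β + β') = g u α β + g u α β' := by
      intro u α β β'
      simp only [hgdef, H.S_add, mul_add, hf2, Finset.sum_add_distrib]
    have hgbal1 : ∀ l u α β, g (H.tL l * u) α β = g u (H.sL l * α) β := by
      intro l u α β
      have h := H.comulL_takeuchi (fun u' v' => f (u' * u) (v' * (α * H.S β)))
        (fun x x' v => by simp only [add_mul, hf1])
        (fun x v v' => by simp only [add_mul, hf2])
        (fun m x v => by
          show f (H.tL m * x * u) (v * (α * H.S β)) = f (x * u) (H.sL m * v * (α * H.S β))
          rw [mul_assoc, hf3, ← mul_assoc]) l i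
      simp only [hgdef]
      calc (∑ k ∈ Finset.range (H.nL i), f (H.c1 i k * (H.tL l * u))
              (H.c2 i k * (α * H.S β)))
          = ∑ k ∈ Finset.range (H.nL i), f (H.c1 i k * H.tL l * u)
              (H.c2 i k * (α * H.S β)) := by simp only [mul_assoc]
        _ = ∑ k ∈ Finset.range (H.nL i), f (H.c1 i k * u)
              (H.c2 i k * H.sL l * (α * H.S β)) := h
        _ = ∑ k ∈ Finset.range (H.nL i), f (H.c1 i k * u)
              (H.c2 i k * (H.sL l * α * H.S β)) := by simp only [mul_assoc]
    have hgbal2 : ∀ r u α β, g u (α * H.sR r) β = g u α (β * H.tR r) := by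
      intro r u α β
      simp only [hgdef, H.S_mul_tR_right]
      refine Finset.sum_congr rfl (fun k hk => ?_)
      congr 1
      rw [mul_assoc]
    have hmix := H.mixed₁ g hg1 hg2 hg3 hgbal1 hgbal2 a
    rw [hU, ← hmix]
    -- now U = ∑_p ∑_{j'} g (c1 (d1 a p) j') (c2 (d1 a p) j') (d2 a p)
    have step3 : ∀ p ∈ Finset.range (H.nR a),
        (∑ j' ∈ Finset.range (H.nL (H.d1 a p)),
          g (H.c1 (H.d1 a p) j') (H.c2 (H.d1 a p) j') (H.d2 a p)) =
        ∑ k ∈ Finset.range (H.nL i),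
          f (H.c1 i k) (H.c2 i k * H.S (H.d2 a p * H.tR (H.πR (H.d1 a p)))) := by
      intro p hp
      set b := H.d1 a p with hbdef
      set w := H.d2 a p with hwdef
      set f' : A → A → A := fun u v => f u (v * H.S w) with hf'def
      have hf'1 : ∀ u u' v, f' (u + u') v = f' u v + f' u' v := by
        intro u u' v; simp only [hf'def, hf1]
      have hf'2 : ∀ u v v', f' u (v + v') = f' u v + f' u v' := by
        intro u v v'; simp only [hf'def, add_mul, hf2]
      have hf'3 : ∀ l u v, f' (H.tL l * u) v = f' u (H.sL l * v) := by
        intro l u v; simp only [hf'def]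
        rw [hf3, mul_assoc]
      have hmul := H.comulL_mul f' hf'1 hf'2 hf'3 i b
      have hswap : (∑ j' ∈ Finset.range (H.nL b),
          g (H.c1 b j') (H.c2 b j') w) =
          ∑ k ∈ Finset.range (H.nL i), ∑ j' ∈ Finset.range (H.nL b),
            f' (H.c1 i k * H.c1 b j') (H.c2 i k * H.c2 b j') := by
        rw [Finset.sum_comm]
        refine Finset.sum_congr rfl (fun j' hj' => ?_)
        simp only [hgdef, hf'def]
        refine Finset.sum_congr rfl (fun k hk => ?_)
        rw [mul_assoc]
      rw [hswap, ← hmul]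
      have hib : i * b = i * H.sR (H.πR b) := hri b
      rw [hib, H.lsum_mul_sR f' hf'1 hf'2 hf'3 (H.πR b) i]
      refine Finset.sum_congr rfl (fun k hk => ?_)
      simp only [hf'def]
      rw [mul_assoc, H.S_mul_tR_right]
    rw [Finset.sum_congr rfl step3, Finset.sum_comm]
    refine Finset.sum_congr rfl (fun k hk => ?_)
    rw [← addf_sum (f := f (H.c1 i k)) (fun v v' => hf2 _ v v'), ← Finset.mul_sum,
      ← addf_sum (f := H.S) H.S_add, H.counitR_right a]
  rw [← way1, way2]

/-- **(P)**: `∑ t_L(ρ(i₍₂₎ a)) i₍₁₎ = S⁻¹(a)`. -/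
lemma P_lemma (i : A) (hri : ∀ a, i * a = i * H.sR (H.πR a))
    (ρ : A → L) (hρ_add : ∀ x y, ρ (x + y) = ρ x + ρ y)
    (hρ_lin : ∀ l x, ρ (H.sL l * x) = l * ρ x)
    (hρ : (∑ k ∈ Finset.range (H.nL i), H.tL (ρ (H.c2 i k)) * H.c1 i k) = 1)
    (a : A) :
    (∑ k ∈ Finset.range (H.nL i), H.tL (ρ (H.c2 i k * a)) * H.c1 i k) = H.Sinv a := by
  have hK := H.K_lemma i hri (fun u v => H.tL (ρ v) * u)
    (fun u u' v => by simp only [mul_add])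
    (fun u v v' => by simp only [hρ_add, H.tL_add, add_mul])
    (fun l u v => by
      show H.tL (ρ v) * (H.tL l * u) = H.tL (ρ (H.sL l * v)) * u
      rw [hρ_lin, H.tL_mul, mul_assoc]) (H.Sinv a)
  rw [H.S_rightinv] at hK
  rw [← hK]
  calc (∑ k ∈ Finset.range (H.nL i), H.tL (ρ (H.c2 i k)) * (H.c1 i k * H.Sinv a))
      = ∑ k ∈ Finset.range (H.nL i), (H.tL (ρ (H.c2 i k)) * H.c1 i k) * H.Sinv a := by
        simp only [mul_assoc]
    _ = (∑ k ∈ Finset.range (H.nL i), H.tL (ρ (H.c2 i k)) * H.c1 i k) * H.Sinv a := by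
        rw [Finset.sum_mul]
    _ = H.Sinv a := by rw [hρ, one_mul]

/-- **(P')**: `i ∗ a = a`. -/
lemma P'_lemma (i : A) (hri : ∀ a, i * a = i * H.sR (H.πR a))
    (ρ : A → L) (hρ_add : ∀ x y, ρ (x + y) = ρ x + ρ y)
    (hρ_lin : ∀ l x, ρ (H.sL l * x) = l * ρ x)
    (hρ : (∑ k ∈ Finset.range (H.nL i), H.tL (ρ (H.c2 i k)) * H.c1 i k) = 1)
    (a : A) :
    (∑ k ∈ Finset.range (H.nL i), H.tL (ρ (H.c2 i k * H.S a)) * H.c1 i k) = a := by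
  rw [H.P_lemma i hri ρ hρ_add hρ_lin hρ (H.S a), H.S_leftinv]

end HopfAlgebroidData
namespace HopfAlgebroidData

variable {A L R : Type u} [Ring A] [Ring L] [Ring R] (H : HopfAlgebroidData A L R)

/-- right `sL`-linearity of `ρ`, via injectivity of `{}_Li`. -/
lemma rho_sL (i : A)
    (hnd₁ : Function.Bijective (H.intMapL i))
    (ρ : A → L) (hρ_add : ∀ x y, ρ (x + y) = ρ x + ρ y)
    (hρ_lin : ∀ l x, ρ (H.sL l * x) = l * ρ x)
    (hρ : (∑ k ∈ Finset.range (H.nL i), H.tL (ρ (H.c2 i k)) * H.c1 i k) = 1)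
    (l : L) (x : A) : ρ (x * H.sL l) = ρ x * l := by
  set φ : H.LStarDual := ⟨fun x => ρ (x * H.sL l),
    fun x y => by simp only [add_mul, hρ_add],
    fun m x => by
      show ρ (H.sL m * x * H.sL l) = m * ρ (x * H.sL l)
      rw [mul_assoc, hρ_lin]⟩ with hφdef
  set ψ : H.LStarDual := ⟨fun x => ρ x * l,
    fun x y => by simp only [hρ_add, add_mul],
    fun m x => by
      show ρ (H.sL m * x) * l = m * (ρ x * l)
      rw [hρ_lin, mul_assoc]⟩ with hψdef
  have hLiφ : H.intMapL i φ = H.tL l := by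
    show (∑ k ∈ Finset.range (H.nL i), H.tL (ρ (H.c2 i k * H.sL l)) * H.c1 i k) = H.tL l
    have h := H.comulL_takeuchi (fun u v => H.tL (ρ v) * u)
      (fun u u' v => by simp only [mul_add])
      (fun u v v' => by simp only [hρ_add, H.tL_add, add_mul])
      (fun m u v => by
        show H.tL (ρ v) * (H.tL m * u) = H.tL (ρ (H.sL m * v)) * u
        rw [hρ_lin, H.tL_mul, mul_assoc]) l i
    rw [← h]
    calc (∑ k ∈ Finset.range (H.nL i), H.tL (ρ (H.c2 i k)) * (H.c1 i k * H.tL l))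
        = (∑ k ∈ Finset.range (H.nL i), H.tL (ρ (H.c2 i k)) * H.c1 i k) * H.tL l := by
          rw [Finset.sum_mul]; simp only [mul_assoc]
      _ = H.tL l := by rw [hρ, one_mul]
  have hLiψ : H.intMapL i ψ = H.tL l := by
    show (∑ k ∈ Finset.range (H.nL i), H.tL (ρ (H.c2 i k) * l) * H.c1 i k) = H.tL l
    calc (∑ k ∈ Finset.range (H.nL i), H.tL (ρ (H.c2 i k) * l) * H.c1 i k)
        = H.tL l * ∑ k ∈ Finset.range (H.nL i), H.tL (ρ (H.c2 i k)) * H.c1 i k := by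
          rw [Finset.mul_sum]
          exact Finset.sum_congr rfl (fun k hk => by rw [H.tL_mul, mul_assoc])
      _ = H.tL l := by rw [hρ, mul_one]
  have := hnd₁.1 (hLiφ.trans hLiψ.symm)
  exact congrFun (congrArg Subtype.val this) x

end HopfAlgebroidData
namespace HopfAlgebroidData

variable {A L R : Type u} [Ring A] [Ring L] [Ring R] (H : HopfAlgebroidData A L R)

lemma rsum_mul_tR (f : A → A → A)
    (hf1 : ∀ u u' v, f (u + u') v = f u v + f u' v)
    (hf2 : ∀ u v v', f u (v + v') = f u v + f u v')
    (hf3 : ∀ r u v, f (u * H.sR r) v = f u (v * H.tR r))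
    (r : R) (a : A) :
    (∑ j ∈ Finset.range (H.nR (a * H.tR r)),
      f (H.d1 (a * H.tR r) j) (H.d2 (a * H.tR r) j)) =
    ∑ j ∈ Finset.range (H.nR a), f (H.d1 a j * H.tR r) (H.d2 a j) := by
  have h := H.comulR_bimod f hf1 hf2 hf3 r 1 a
  rw [H.sR_one, mul_one] at h
  simpa [H.sR_one, mul_one] using h

/-- `sL (πL (x * tR r)) = ∑ d1 x q * tR r * S (d2 x q)`. -/
lemma sLpiL_mul_tR (r : R) (x : A) :
    H.sL (H.πL (x * H.tR r)) =
    ∑ q ∈ Finset.range (H.nR x), H.d1 x q * H.tR r * H.S (H.d2 x q) := by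
  rw [← H.antipode_R (x * H.tR r)]
  exact H.rsum_mul_tR (fun u v => u * H.S v)
    (fun u u' v => by show (u + u') * H.S v = u * H.S v + u' * H.S v; rw [add_mul])
    (fun u v v' => by show u * H.S (v + v') = u * H.S v + u * H.S v'; rw [H.S_add, mul_add])
    (fun r' u v => by
      show (u * H.sR r') * H.S v = u * H.S (v * H.tR r')
      rw [H.S_mul_tR_right, mul_assoc]) r x

/-- Antipode is anti-multiplicative. -/
lemma S_antimul (a b : A) : H.S (a * b) = H.S b * H.S a := by
  classical
  set T : A := ∑ j ∈ Finset.range (H.nL a), ∑ q ∈ Finset.range (H.nR (H.c2 a j)),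
      ∑ m ∈ Finset.range (H.nL b), ∑ n ∈ Finset.range (H.nR (H.c2 b m)),
        H.S (H.c1 b m) * (H.S (H.c1 a j) *
          ((H.d1 (H.c2 a j) q * H.d1 (H.c2 b m) n) *
            H.S (H.d2 (H.c2 a j) q * H.d2 (H.c2 b m) n))) with hTdef
  -- ================= Route 2 : T = S (a * b) =================
  have route2 : T = H.S (a * b) := by
    set g : A → A → A → A := fun u α β =>
      ∑ m ∈ Finset.range (H.nL b), ∑ n ∈ Finset.range (H.nR (H.c2 b m)),
        H.S (H.c1 b m) * (H.S u *
          ((α * H.d1 (H.c2 b m) n) * H.S (β * H.d2 (H.c2 b m) n))) with hgdef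
    have hg1 : ∀ u u' α β, g (u + u') α β = g u α β + g u' α β := by
      intro u u' α β
      simp only [hgdef, H.S_add, add_mul, mul_add, Finset.sum_add_distrib]
    have hg2 : ∀ u α α' β, g u (α + α') β = g u α β + g u α' β := by
      intro u α α' β
      simp only [hgdef, add_mul, mul_add, Finset.sum_add_distrib]
    have hg3 : ∀ u α β β', g u α (β + β') = g u α β + g u α β' := by
      intro u α β β'
      simp only [hgdef, add_mul, H.S_add, mul_add, Finset.sum_add_distrib]
    have hgbal1 : ∀ l u α β, g (H.tL l * u) α β = g u (H.sL l * α) β := by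
      intro l u α β
      simp only [hgdef, H.S_mul_tL_left]
      refine Finset.sum_congr rfl (fun m hm => Finset.sum_congr rfl (fun n hn => ?_))
      simp only [mul_assoc]
    have hgbal2 : ∀ r u α β, g u (α * H.sR r) β = g u α (β * H.tR r) := by
      intro r u α β
      simp only [hgdef]
      refine Finset.sum_congr rfl (fun m hm => ?_)
      have h := H.comulR_takeuchi
        (fun γ δ => H.S (H.c1 b m) * (H.S u * ((α * γ) * H.S (β * δ))))
        (fun x x' v => by simp only [mul_add, add_mul])
        (fun x v v' => by simp only [H.S_add, mul_add])
        (fun r' x v => by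
          show H.S (H.c1 b m) * (H.S u * ((α * (x * H.sR r')) * H.S (β * v)))
            = H.S (H.c1 b m) * (H.S u * ((α * x) * H.S (β * (v * H.tR r'))))
          rw [show β * (v * H.tR r') = (β * v) * H.tR r' by rw [mul_assoc],
            H.S_mul_tR_right]
          simp only [mul_assoc]) r (H.c2 b m)
      calc (∑ n ∈ Finset.range (H.nR (H.c2 b m)),
              H.S (H.c1 b m) * (H.S u *
                (((α * H.sR r) * H.d1 (H.c2 b m) n) * H.S (β * H.d2 (H.c2 b m) n))))
          = ∑ n ∈ Finset.range (H.nR (H.c2 b m)),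
              H.S (H.c1 b m) * (H.S u *
                ((α * (H.sR r * H.d1 (H.c2 b m) n)) * H.S (β * H.d2 (H.c2 b m) n))) := by
            simp only [mul_assoc]
        _ = ∑ n ∈ Finset.range (H.nR (H.c2 b m)),
              H.S (H.c1 b m) * (H.S u *
                ((α * H.d1 (H.c2 b m) n) * H.S (β * (H.tR r * H.d2 (H.c2 b m) n)))) := h
        _ = ∑ n ∈ Finset.range (H.nR (H.c2 b m)),
              H.S (H.c1 b m) * (H.S u *
                ((α * H.d1 (H.c2 b m) n) * H.S ((β * H.tR r) * H.d2 (H.c2 b m) n))) := by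
            simp only [mul_assoc]
    have hmix := H.mixed₁ g hg1 hg2 hg3 hgbal1 hgbal2 a
    have hT2 : T = ∑ j ∈ Finset.range (H.nL a), ∑ q ∈ Finset.range (H.nR (H.c2 a j)),
        g (H.c1 a j) (H.d1 (H.c2 a j) q) (H.d2 (H.c2 a j) q) := hTdef
    rw [hT2, ← hmix]
    -- step B & C : per p, collapse the inner j'-sum and move `sR (πR (d1 a p))`
    have stepBC : ∀ p ∈ Finset.range (H.nR a),
        (∑ j' ∈ Finset.range (H.nL (H.d1 a p)),
          g (H.c1 (H.d1 a p) j') (H.c2 (H.d1 a p) j') (H.d2 a p)) =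
        ∑ m ∈ Finset.range (H.nL b), ∑ n ∈ Finset.range (H.nR (H.c2 b m)),
          H.S (H.c1 b m) * (H.d1 (H.c2 b m) n *
            H.S ((H.d2 a p * H.tR (H.πR (H.d1 a p))) * H.d2 (H.c2 b m) n)) := by
      intro p hp
      simp only [hgdef]
      rw [Finset.sum_comm]
      refine Finset.sum_congr rfl (fun m hm => ?_)
      rw [Finset.sum_comm]
      -- fixed p, m : goal is about  ∑_n ∑_{j'} …  =  ∑_n …
      have hfac : ∀ n, (∑ j' ∈ Finset.range (H.nL (H.d1 a p)),
          H.S (H.c1 b m) * (H.S (H.c1 (H.d1 a p) j') *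
            ((H.c2 (H.d1 a p) j' * H.d1 (H.c2 b m) n) *
              H.S (H.d2 a p * H.d2 (H.c2 b m) n)))) =
          H.S (H.c1 b m) * ((H.sR (H.πR (H.d1 a p)) * H.d1 (H.c2 b m) n) *
            H.S (H.d2 a p * H.d2 (H.c2 b m) n)) := by
        intro n
        rw [← H.antipode_L (H.d1 a p), Finset.sum_mul, Finset.sum_mul, Finset.mul_sum]
        refine Finset.sum_congr rfl (fun j' hj' => ?_)
        simp only [mul_assoc]
      rw [Finset.sum_congr rfl (fun n _ => hfac n)]
      -- takeuchi over n
      have h := H.comulR_takeuchi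
        (fun γ δ => H.S (H.c1 b m) * (γ * H.S (H.d2 a p * δ)))
        (fun x x' v => by simp only [add_mul, mul_add])
        (fun x v v' => by simp only [mul_add, H.S_add])
        (fun r' x v => by
          show H.S (H.c1 b m) * ((x * H.sR r') * H.S (H.d2 a p * v))
            = H.S (H.c1 b m) * (x * H.S (H.d2 a p * (v * H.tR r')))
          rw [show H.d2 a p * (v * H.tR r') = (H.d2 a p * v) * H.tR r' by rw [mul_assoc],
            H.S_mul_tR_right]
          simp only [mul_assoc]) (H.πR (H.d1 a p)) (H.c2 b m)
      rw [h]
      refine Finset.sum_congr rfl (fun n hn => ?_)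
      congr 1
      congr 1
      congr 1
      simp only [mul_assoc]
    rw [Finset.sum_congr rfl stepBC]
    rw [Finset.sum_comm]
    rw [Finset.sum_congr rfl (fun m (_ : m ∈ Finset.range (H.nL b)) => Finset.sum_comm)]
    have stepD : ∀ m ∈ Finset.range (H.nL b),
        (∑ n ∈ Finset.range (H.nR (H.c2 b m)), ∑ p ∈ Finset.range (H.nR a),
          H.S (H.c1 b m) * (H.d1 (H.c2 b m) n *
            H.S ((H.d2 a p * H.tR (H.πR (H.d1 a p))) * H.d2 (H.c2 b m) n))) =
        ∑ n ∈ Finset.range (H.nR (H.c2 b m)),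
          H.S (H.c1 b m) * (H.d1 (H.c2 b m) n * H.S (a * H.d2 (H.c2 b m) n)) := by
      intro m hm
      refine Finset.sum_congr rfl (fun n hn => ?_)
      rw [← Finset.mul_sum]
      congr 1
      rw [← Finset.mul_sum]
      congr 1
      rw [← addf_sum (f := H.S) H.S_add, ← Finset.sum_mul, H.counitR_right a]
    rw [Finset.sum_congr rfl stepD]
    -- step E
    set g' : A → A → A → A := fun u α β => H.S u * (α * H.S (a * β)) with hg'def
    have hmix' := H.mixed₁ g'
      (fun u u' α β => by
        show H.S (u + u') * _ = _
        rw [H.S_add, add_mul])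
      (fun u α α' β => by
        show H.S u * ((α + α') * _) = _
        rw [add_mul, mul_add])
      (fun u α β β' => by
        show H.S u * (α * H.S (a * (β + β'))) = _
        rw [mul_add, H.S_add, mul_add, mul_add])
      (fun l u α β => by
        show H.S (H.tL l * u) * (α * H.S (a * β)) = H.S u * ((H.sL l * α) * H.S (a * β))
        rw [H.S_mul_tL_left]
        simp only [mul_assoc])
      (fun r u α β => by
        show H.S u * ((α * H.sR r) * H.S (a * β)) = H.S u * (α * H.S (a * (β * H.tR r)))
        rw [show a * (β * H.tR r) = (a * β) * H.tR r by rw [mul_assoc],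
          H.S_mul_tR_right]
        simp only [mul_assoc]) b
    rw [show (∑ m ∈ Finset.range (H.nL b), ∑ n ∈ Finset.range (H.nR (H.c2 b m)),
          H.S (H.c1 b m) * (H.d1 (H.c2 b m) n * H.S (a * H.d2 (H.c2 b m) n))) =
        ∑ m ∈ Finset.range (H.nL b), ∑ n ∈ Finset.range (H.nR (H.c2 b m)),
          g' (H.c1 b m) (H.d1 (H.c2 b m) n) (H.d2 (H.c2 b m) n) from rfl, ← hmix']
    have stepE : ∀ p ∈ Finset.range (H.nR b),
        (∑ j'' ∈ Finset.range (H.nL (H.d1 b p)),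
          g' (H.c1 (H.d1 b p) j'') (H.c2 (H.d1 b p) j'') (H.d2 b p)) =
        H.S (a * (H.d2 b p * H.tR (H.πR (H.d1 b p)))) := by
      intro p hp
      have hfac : (∑ j'' ∈ Finset.range (H.nL (H.d1 b p)),
          g' (H.c1 (H.d1 b p) j'') (H.c2 (H.d1 b p) j'') (H.d2 b p)) =
          H.sR (H.πR (H.d1 b p)) * H.S (a * H.d2 b p) := by
        rw [← H.antipode_L (H.d1 b p), Finset.sum_mul]
        refine Finset.sum_congr rfl (fun j'' hj'' => ?_)
        simp only [hg'def, mul_assoc]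
      rw [hfac, ← H.S_mul_tR_right, mul_assoc]
    rw [Finset.sum_congr rfl stepE, ← addf_sum (f := H.S) H.S_add, ← Finset.mul_sum,
      H.counitR_right b]
  -- ================= Route 1 : T = S b * S a =================
  have route1 : T = H.S b * H.S a := by
    have step1 : ∀ j ∈ Finset.range (H.nL a),
        (∑ q ∈ Finset.range (H.nR (H.c2 a j)), ∑ m ∈ Finset.range (H.nL b),
          ∑ n ∈ Finset.range (H.nR (H.c2 b m)),
            H.S (H.c1 b m) * (H.S (H.c1 a j) *
              ((H.d1 (H.c2 a j) q * H.d1 (H.c2 b m) n) *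
                H.S (H.d2 (H.c2 a j) q * H.d2 (H.c2 b m) n)))) =
        ∑ m ∈ Finset.range (H.nL b),
          H.S (H.c1 b m) * (H.S (H.c1 a j) * H.sL (H.πL (H.c2 a j * H.c2 b m))) := by
      intro j hj
      rw [Finset.sum_comm]
      refine Finset.sum_congr rfl (fun m hm => ?_)
      have hmul := H.comulR_mul
        (fun u v => H.S (H.c1 b m) * (H.S (H.c1 a j) * (u * H.S v)))
        (fun u u' v => by
          show H.S (H.c1 b m) * (H.S (H.c1 a j) * ((u + u') * H.S v)) = _
          rw [add_mul, mul_add, mul_add])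
        (fun u v v' => by
          show H.S (H.c1 b m) * (H.S (H.c1 a j) * (u * H.S (v + v'))) = _
          rw [H.S_add, mul_add, mul_add, mul_add])
        (fun r u v => by
          show H.S (H.c1 b m) * (H.S (H.c1 a j) * ((u * H.sR r) * H.S v))
            = H.S (H.c1 b m) * (H.S (H.c1 a j) * (u * H.S (v * H.tR r)))
          rw [H.S_mul_tR_right]
          simp only [mul_assoc]) (H.c2 a j) (H.c2 b m)
      rw [← hmul, ← H.antipode_R (H.c2 a j * H.c2 b m), Finset.mul_sum, Finset.mul_sum]
    rw [hTdef, Finset.sum_congr rfl step1, Finset.sum_comm]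
    have step2 : ∀ m ∈ Finset.range (H.nL b),
        (∑ j ∈ Finset.range (H.nL a),
          H.S (H.c1 b m) * (H.S (H.c1 a j) * H.sL (H.πL (H.c2 a j * H.c2 b m)))) =
        H.S (H.c1 b m) * (H.sL (H.πL (H.c2 b m)) * H.S a) := by
      intro m hm
      obtain ⟨r, hr⟩ := H.exists_tR_eq_sL (H.πL (H.c2 b m))
      have hrw : ∀ j, H.sL (H.πL (H.c2 a j * H.c2 b m)) =
          ∑ q ∈ Finset.range (H.nR (H.c2 a j)),
            H.d1 (H.c2 a j) q * H.tR r * H.S (H.d2 (H.c2 a j) q) := by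
        intro j
        rw [← H.πL_runit (H.c2 a j) (H.c2 b m), ← hr, H.sLpiL_mul_tR]
      set g2 : A → A → A → A := fun u α β =>
        H.S (H.c1 b m) * (H.S u * (α * (H.tR r * H.S β))) with hg2def
      have hstep : (∑ j ∈ Finset.range (H.nL a),
          H.S (H.c1 b m) * (H.S (H.c1 a j) * H.sL (H.πL (H.c2 a j * H.c2 b m)))) =
          ∑ j ∈ Finset.range (H.nL a), ∑ q ∈ Finset.range (H.nR (H.c2 a j)),
            g2 (H.c1 a j) (H.d1 (H.c2 a j) q) (H.d2 (H.c2 a j) q) := by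
        refine Finset.sum_congr rfl (fun j hj => ?_)
        rw [hrw j, Finset.mul_sum, Finset.mul_sum]
        refine Finset.sum_congr rfl (fun q hq => ?_)
        simp only [hg2def, mul_assoc]
      rw [hstep]
      have hmix2 := H.mixed₁ g2
        (fun u u' α β => by
          simp only [hg2def, H.S_add, add_mul, mul_add])
        (fun u α α' β => by
          simp only [hg2def, add_mul, mul_add])
        (fun u α β β' => by
          simp only [hg2def, H.S_add, mul_add])
        (fun l u α β => by
          show H.S (H.c1 b m) * (H.S (H.tL l * u) * (α * (H.tR r * H.S β))) = _
          rw [H.S_mul_tL_left]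
          simp only [hg2def, mul_assoc])
        (fun r' u α β => by
          show H.S (H.c1 b m) * (H.S u * ((α * H.sR r') * (H.tR r * H.S β)))
            = H.S (H.c1 b m) * (H.S u * (α * (H.tR r * H.S (β * H.tR r'))))
          rw [H.S_mul_tR_right]
          have hcomm : H.sR r' * (H.tR r * H.S β) = H.tR r * (H.sR r' * H.S β) := by
            rw [← mul_assoc, H.commR, mul_assoc]
          simp only [hg2def, mul_assoc, hcomm]) a
      rw [← hmix2]
      have step3 : ∀ p ∈ Finset.range (H.nR a),
          (∑ j' ∈ Finset.range (H.nL (H.d1 a p)),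
            g2 (H.c1 (H.d1 a p) j') (H.c2 (H.d1 a p) j') (H.d2 a p)) =
          H.S (H.c1 b m) * (H.tR r *
            H.S (H.d2 a p * H.tR (H.πR (H.d1 a p)))) := by
        intro p hp
        have hfac : (∑ j' ∈ Finset.range (H.nL (H.d1 a p)),
            g2 (H.c1 (H.d1 a p) j') (H.c2 (H.d1 a p) j') (H.d2 a p)) =
            H.S (H.c1 b m) * (H.sR (H.πR (H.d1 a p)) * (H.tR r * H.S (H.d2 a p))) := by
          rw [← H.antipode_L (H.d1 a p), Finset.sum_mul, Finset.mul_sum]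
          refine Finset.sum_congr rfl (fun j' hj' => ?_)
          simp only [hg2def, mul_assoc]
        rw [hfac]
        congr 1
        rw [← mul_assoc, H.commR, mul_assoc, ← H.S_mul_tR_right]
      rw [Finset.sum_congr rfl step3, ← Finset.mul_sum, ← Finset.mul_sum,
        ← addf_sum (f := H.S) H.S_add, H.counitR_right a, hr]
    rw [Finset.sum_congr rfl step2]
    calc (∑ m ∈ Finset.range (H.nL b),
            H.S (H.c1 b m) * (H.sL (H.πL (H.c2 b m)) * H.S a))
        = ∑ m ∈ Finset.range (H.nL b),
            H.S (H.tL (H.πL (H.c2 b m)) * H.c1 b m) * H.S a := by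
          refine Finset.sum_congr rfl (fun m hm => ?_)
          rw [H.S_mul_tL_left, mul_assoc]
      _ = H.S (∑ m ∈ Finset.range (H.nL b), H.tL (H.πL (H.c2 b m)) * H.c1 b m) * H.S a := by
          rw [addf_sum (f := H.S) H.S_add, Finset.sum_mul]
      _ = H.S b * H.S a := by rw [H.counitL_right b]
  exact route2.symm.trans route1

end HopfAlgebroidData
namespace HopfAlgebroidData

variable {A L R : Type u} [Ring A] [Ring L] [Ring R] (H : HopfAlgebroidData A L R)

lemma hconv_def (ρ : A → L) (h k : A) :
    H.hconv ρ h k = ∑ j ∈ Finset.range (H.nL h), H.tL (ρ (H.c2 h j * H.S k)) * H.c1 h j := rfl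

/-- `∑ d1 y S (k · d2 y) = sL (πL y) S k`. -/
lemma d1_S_mul (y k : A) :
    (∑ q ∈ Finset.range (H.nR y), H.d1 y q * H.S (k * H.d2 y q)) =
    H.sL (H.πL y) * H.S k := by
  calc (∑ q ∈ Finset.range (H.nR y), H.d1 y q * H.S (k * H.d2 y q))
      = ∑ q ∈ Finset.range (H.nR y), (H.d1 y q * H.S (H.d2 y q)) * H.S k := by
        refine Finset.sum_congr rfl (fun q hq => ?_)
        rw [H.S_antimul, mul_assoc]
    _ = (∑ q ∈ Finset.range (H.nR y), H.d1 y q * H.S (H.d2 y q)) * H.S k := by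
        rw [Finset.sum_mul]
    _ = H.sL (H.πL y) * H.S k := by rw [H.antipode_R]

/-- **U1'**: `i ↼ ρ(h S ·) = h`, via surjectivity of `i_L`. -/
lemma RiInv (i : A) (hri : ∀ a, i * a = i * H.sR (H.πR a))
    (hnd₂ : Function.Bijective (H.intMapR i))
    (ρ : A → L) (hρ_add : ∀ x y, ρ (x + y) = ρ x + ρ y)
    (hρ_lin : ∀ l x, ρ (H.sL l * x) = l * ρ x)
    (hρ : (∑ k ∈ Finset.range (H.nL i), H.tL (ρ (H.c2 i k)) * H.c1 i k) = 1)
    (h : A) :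
    (∑ k ∈ Finset.range (H.nL i), H.sL (ρ (h * H.S (H.c1 i k))) * H.c2 i k) = h := by
  obtain ⟨φ, hφ⟩ := hnd₂.2 h
  have hφ' : (∑ k ∈ Finset.range (H.nL i), H.sL (φ.1 (H.c1 i k)) * H.c2 i k) = h := hφ
  have key : ∀ z, ρ (h * H.S z) = φ.1 z := by
    intro z
    calc ρ (h * H.S z)
        = ρ ((∑ m ∈ Finset.range (H.nL i), H.sL (φ.1 (H.c1 i m)) * H.c2 i m) * H.S z) := by
          rw [hφ']
      _ = ρ (∑ m ∈ Finset.range (H.nL i), H.sL (φ.1 (H.c1 i m)) * (H.c2 i m * H.S z)) := by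
          rw [Finset.sum_mul]
          simp only [mul_assoc]
      _ = ∑ m ∈ Finset.range (H.nL i), φ.1 (H.c1 i m) * ρ (H.c2 i m * H.S z) := by
          rw [addf_sum (f := ρ) hρ_add]
          exact Finset.sum_congr rfl (fun m hm => hρ_lin _ _)
      _ = ∑ m ∈ Finset.range (H.nL i), φ.1 (H.tL (ρ (H.c2 i m * H.S z)) * H.c1 i m) := by
          exact Finset.sum_congr rfl (fun m hm => (φ.2.2 _ _).symm)
      _ = φ.1 (∑ m ∈ Finset.range (H.nL i), H.tL (ρ (H.c2 i m * H.S z)) * H.c1 i m) :=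
          (addf_sum (f := φ.1) φ.2.1 _ _).symm
      _ = φ.1 z := by rw [H.P'_lemma i hri ρ hρ_add hρ_lin hρ z]
  calc (∑ k ∈ Finset.range (H.nL i), H.sL (ρ (h * H.S (H.c1 i k))) * H.c2 i k)
      = ∑ k ∈ Finset.range (H.nL i), H.sL (φ.1 (H.c1 i k)) * H.c2 i k := by
        exact Finset.sum_congr rfl (fun k hk => by rw [key])
    _ = h := hφ'

/-- **(EQ)**: the two closed forms of the convolution product agree. -/
lemma hconv_formB (i : A) (hri : ∀ a, i * a = i * H.sR (H.πR a))
    (hnd₁ : Function.Bijective (H.intMapL i))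
    (hnd₂ : Function.Bijective (H.intMapR i))
    (ρ : A → L) (hρ_add : ∀ x y, ρ (x + y) = ρ x + ρ y)
    (hρ_lin : ∀ l x, ρ (H.sL l * x) = l * ρ x)
    (hρ : (∑ k ∈ Finset.range (H.nL i), H.tL (ρ (H.c2 i k)) * H.c1 i k) = 1)
    (h k : A) :
    H.hconv ρ h k =
    ∑ j ∈ Finset.range (H.nL k), H.sL (ρ (h * H.S (H.c1 k j))) * H.c2 k j := by
  have hsL : ∀ l x, ρ (x * H.sL l) = ρ x * l := H.rho_sL i hnd₁ ρ hρ_add hρ_lin hρ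
  -- the two balanced pairings
  set f₂ : A → A → A := fun u v => H.tL (ρ (v * H.S k)) * u with hf₂def
  have hf₂1 : ∀ u u' v, f₂ (u + u') v = f₂ u v + f₂ u' v := by
    intro u u' v; simp only [hf₂def, mul_add]
  have hf₂2 : ∀ u v v', f₂ u (v + v') = f₂ u v + f₂ u v' := by
    intro u v v'; simp only [hf₂def, add_mul, hρ_add, H.tL_add]
  have hf₂3 : ∀ l u v, f₂ (H.tL l * u) v = f₂ u (H.sL l * v) := by
    intro l u v
    simp only [hf₂def]
    rw [show H.sL l * v * H.S k = H.sL l * (v * H.S k) by rw [mul_assoc], hρ_lin,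
      H.tL_mul, mul_assoc]
  set f₀ : A → A → A := fun u v => H.sL (ρ (h * H.S u)) * v with hf₀def
  have hf₀1 : ∀ u u' v, f₀ (u + u') v = f₀ u v + f₀ u' v := by
    intro u u' v
    simp only [hf₀def, H.S_add, mul_add, hρ_add, H.sL_add, add_mul]
  have hf₀2 : ∀ u v v', f₀ u (v + v') = f₀ u v + f₀ u v' := by
    intro u v v'; simp only [hf₀def, mul_add]
  have hf₀3 : ∀ l u v, f₀ (H.tL l * u) v = f₀ u (H.sL l * v) := by
    intro l u v
    simp only [hf₀def]
    rw [H.S_mul_tL_left, show h * (H.S u * H.sL l) = (h * H.S u) * H.sL l by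
      rw [mul_assoc], hsL, H.sL_mul, mul_assoc]
  -- expand h by U1'
  have hU1 := H.RiInv i hri hnd₂ ρ hρ_add hρ_lin hρ h
  set lam : ℕ → L := fun m => ρ (h * H.S (H.c1 i m)) with hlamdef
  set mu : ℕ → L := fun m => ρ (H.c2 i m * H.S k) with hmudef
  have step1 : H.hconv ρ h k =
      ∑ m ∈ Finset.range (H.nL i), ∑ j ∈ Finset.range (H.nL (H.c2 i m)),
        H.sL (lam m) * (H.tL (ρ (H.c2 (H.c2 i m) j * H.S k)) * H.c1 (H.c2 i m) j) := by
    rw [H.hconv_def]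
    have hrw : (∑ j ∈ Finset.range (H.nL h), H.tL (ρ (H.c2 h j * H.S k)) * H.c1 h j) =
        ∑ j ∈ Finset.range (H.nL h), f₂ (H.c1 h j) (H.c2 h j) := rfl
    rw [hrw]
    conv_lhs => rw [← hU1]
    rw [H.lsum_sum f₂ hf₂1 hf₂2 hf₂3 (Finset.range (H.nL i))
      (fun m => H.sL (lam m) * H.c2 i m)]
    refine Finset.sum_congr rfl (fun m hm => ?_)
    rw [H.lsum_sL f₂ hf₂1 hf₂2 hf₂3 (lam m) (H.c2 i m)]
    refine Finset.sum_congr rfl (fun j hj => ?_)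
    simp only [hf₂def]
    rw [← mul_assoc, ← H.commL, mul_assoc]
  -- coassociativity on i
  set g : A → A → A → A := fun u v w =>
    H.sL (ρ (h * H.S u)) * (H.tL (ρ (w * H.S k)) * v) with hgdef
  have hco := H.comulL_coassoc g
    (fun u u' v w => by
      simp only [hgdef, H.S_add, mul_add, hρ_add, H.sL_add, add_mul])
    (fun u v v' w => by simp only [hgdef, mul_add])
    (fun u v w w' => by simp only [hgdef, add_mul, hρ_add, H.tL_add, mul_add])
    (fun l u v w => by
      simp only [hgdef]
      rw [H.S_mul_tL_left, show h * (H.S u * H.sL l) = (h * H.S u) * H.sL l by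
        rw [mul_assoc], hsL, H.sL_mul]
      rw [mul_assoc]
      congr 1
      rw [← mul_assoc, H.commL, mul_assoc])
    (fun l u v w => by
      simp only [hgdef]
      congr 1
      rw [show H.sL l * w * H.S k = H.sL l * (w * H.S k) by rw [mul_assoc], hρ_lin,
        H.tL_mul, mul_assoc])
    i
  have step2 : (∑ m ∈ Finset.range (H.nL i), ∑ j ∈ Finset.range (H.nL (H.c2 i m)),
      H.sL (lam m) * (H.tL (ρ (H.c2 (H.c2 i m) j * H.S k)) * H.c1 (H.c2 i m) j)) =
      ∑ m ∈ Finset.range (H.nL i), ∑ t ∈ Finset.range (H.nL (H.c1 i m)),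
        H.sL (ρ (h * H.S (H.c1 (H.c1 i m) t))) * (H.tL (mu m) * H.c2 (H.c1 i m) t) := by
    rw [← hco]
  rw [step1, step2]
  -- reassemble the right-hand side
  have step3 : ∀ m ∈ Finset.range (H.nL i),
      (∑ t ∈ Finset.range (H.nL (H.c1 i m)),
        H.sL (ρ (h * H.S (H.c1 (H.c1 i m) t))) * (H.tL (mu m) * H.c2 (H.c1 i m) t)) =
      ∑ t ∈ Finset.range (H.nL (H.tL (mu m) * H.c1 i m)),
        f₀ (H.c1 (H.tL (mu m) * H.c1 i m) t) (H.c2 (H.tL (mu m) * H.c1 i m) t) := by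
    intro m hm
    rw [H.lsum_tL f₀ hf₀1 hf₀2 hf₀3 (mu m) (H.c1 i m)]
  rw [Finset.sum_congr rfl step3,
    ← H.lsum_sum f₀ hf₀1 hf₀2 hf₀3 (Finset.range (H.nL i))
      (fun m => H.tL (mu m) * H.c1 i m)]
  have hk : (∑ m ∈ Finset.range (H.nL i), H.tL (mu m) * H.c1 i m) = k :=
    H.P'_lemma i hri ρ hρ_add hρ_lin hρ k
  rw [hk]

end HopfAlgebroidData
namespace HopfAlgebroidData

variable {A L R : Type u} [Ring A] [Ring L] [Ring R] (H : HopfAlgebroidData A L R)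

section Claims

variable (i : A) (hri : ∀ a, i * a = i * H.sR (H.πR a))
  (hnd₁ : Function.Bijective (H.intMapL i))
  (hnd₂ : Function.Bijective (H.intMapR i))
  (ρ : A → L) (hρ_add : ∀ x y, ρ (x + y) = ρ x + ρ y)
  (hρ_lin : ∀ l x, ρ (H.sL l * x) = l * ρ x)
  (hρ : (∑ k ∈ Finset.range (H.nL i), H.tL (ρ (H.c2 i k)) * H.c1 i k) = 1)

include hri hnd₁ hnd₂ hρ_add hρ_lin hρ

/-- Claim 2: `η` is a right `H`-module map. -/
lemma claim_eta (r : R) (a : A) : H.heta i (H.πR (H.sR r * a)) = H.heta i r * a := by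
  show i * H.sR (H.πR (H.sR r * a)) = (i * H.sR r) * a
  rw [← hri (H.sR r * a), ← mul_assoc]

/-- Claim 5: `η(r) ∗ h = h t_R(r)`. -/
lemma claim_lunit (h : A) (r : R) : H.hconv ρ (H.heta i r) h = h * H.tR r := by
  rw [H.hconv_def]
  show (∑ j ∈ Finset.range (H.nL (i * H.sR r)),
      H.tL (ρ (H.c2 (i * H.sR r) j * H.S h)) * H.c1 (i * H.sR r) j) = h * H.tR r
  have hbal := H.lsum_mul_sR (fun u v => H.tL (ρ (v * H.S h)) * u)
    (fun u u' v => by show H.tL _ * (u + u') = _; rw [mul_add])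
    (fun u v v' => by
      show H.tL (ρ ((v + v') * H.S h)) * u = _
      rw [add_mul, hρ_add, H.tL_add, add_mul])
    (fun l u v => by
      show H.tL (ρ (v * H.S h)) * (H.tL l * u) = H.tL (ρ (H.sL l * v * H.S h)) * u
      rw [mul_assoc (H.sL l), hρ_lin, H.tL_mul, mul_assoc]) r i
  rw [hbal]
  have : ∀ k, H.c2 i k * H.sR r * H.S h = H.c2 i k * H.S (h * H.tR r) := by
    intro k
    rw [H.S_mul_tR_right, mul_assoc]
  rw [Finset.sum_congr rfl (fun k _ => by rw [this k])]
  exact H.P'_lemma i hri ρ hρ_add hρ_lin hρ (h * H.tR r)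

/-- Claim 4: `h ∗ η(r) = h s_R(r)`. -/
lemma claim_runit (h : A) (r : R) : H.hconv ρ h (H.heta i r) = h * H.sR r := by
  have hsL : ∀ l x, ρ (x * H.sL l) = ρ x * l := H.rho_sL i hnd₁ ρ hρ_add hρ_lin hρ
  rw [H.hconv_formB i hri hnd₁ hnd₂ ρ hρ_add hρ_lin hρ]
  show (∑ j ∈ Finset.range (H.nL (i * H.sR r)),
      H.sL (ρ (h * H.S (H.c1 (i * H.sR r) j))) * H.c2 (i * H.sR r) j) = h * H.sR r
  have hbal := H.lsum_mul_sR (fun u v => H.sL (ρ (h * H.S u)) * v)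
    (fun u u' v => by
      show H.sL (ρ (h * H.S (u + u'))) * v = _
      rw [H.S_add, mul_add, hρ_add, H.sL_add, add_mul])
    (fun u v v' => by show H.sL _ * (v + v') = _; rw [mul_add])
    (fun l u v => by
      show H.sL (ρ (h * H.S (H.tL l * u))) * v = H.sL (ρ (h * H.S u)) * (H.sL l * v)
      rw [H.S_mul_tL_left, ← mul_assoc (h), hsL, H.sL_mul, mul_assoc]) r i
  rw [hbal]
  calc (∑ j ∈ Finset.range (H.nL i), H.sL (ρ (h * H.S (H.c1 i j))) * (H.c2 i j * H.sR r))
      = (∑ j ∈ Finset.range (H.nL i), H.sL (ρ (h * H.S (H.c1 i j))) * H.c2 i j) * H.sR r := by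
        rw [Finset.sum_mul]
        simp only [mul_assoc]
    _ = h * H.sR r := by rw [H.RiInv i hri hnd₂ ρ hρ_add hρ_lin hρ h]

/-- Claim 3: associativity of `∗`. -/
lemma claim_assoc (h k m : A) :
    H.hconv ρ (H.hconv ρ h k) m = H.hconv ρ h (H.hconv ρ k m) := by
  have hsL : ∀ l x, ρ (x * H.sL l) = ρ x * l := H.rho_sL i hnd₁ ρ hρ_add hρ_lin hρ
  -- balanced pairings
  set f₂ : A → A → A := fun u v => H.tL (ρ (v * H.S m)) * u with hf₂def
  have hf₂1 : ∀ u u' v, f₂ (u + u') v = f₂ u v + f₂ u' v := by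
    intro u u' v; simp only [hf₂def, mul_add]
  have hf₂2 : ∀ u v v', f₂ u (v + v') = f₂ u v + f₂ u v' := by
    intro u v v'; simp only [hf₂def, add_mul, hρ_add, H.tL_add]
  have hf₂3 : ∀ l u v, f₂ (H.tL l * u) v = f₂ u (H.sL l * v) := by
    intro l u v
    simp only [hf₂def]
    rw [mul_assoc (H.sL l), hρ_lin, H.tL_mul, mul_assoc]
  set f₀ : A → A → A := fun u v => H.sL (ρ (h * H.S u)) * v with hf₀def
  have hf₀1 : ∀ u u' v, f₀ (u + u') v = f₀ u v + f₀ u' v := by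
    intro u u' v; simp only [hf₀def, H.S_add, mul_add, hρ_add, H.sL_add, add_mul]
  have hf₀2 : ∀ u v v', f₀ u (v + v') = f₀ u v + f₀ u v' := by
    intro u v v'; simp only [hf₀def, mul_add]
  have hf₀3 : ∀ l u v, f₀ (H.tL l * u) v = f₀ u (H.sL l * v) := by
    intro l u v
    simp only [hf₀def]
    rw [H.S_mul_tL_left, ← mul_assoc (h), hsL, H.sL_mul, mul_assoc]
  -- LHS
  have hLHS : H.hconv ρ (H.hconv ρ h k) m =
      ∑ j ∈ Finset.range (H.nL k),
        H.sL (ρ (h * H.S (H.c1 k j))) * H.hconv ρ (H.c2 k j) m := by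
    rw [H.hconv_def ρ (H.hconv ρ h k) m,
      show (∑ j ∈ Finset.range (H.nL (H.hconv ρ h k)),
        H.tL (ρ (H.c2 (H.hconv ρ h k) j * H.S m)) * H.c1 (H.hconv ρ h k) j) =
        ∑ j ∈ Finset.range (H.nL (H.hconv ρ h k)),
          f₂ (H.c1 (H.hconv ρ h k) j) (H.c2 (H.hconv ρ h k) j) from rfl,
      H.hconv_formB i hri hnd₁ hnd₂ ρ hρ_add hρ_lin hρ h k,
      H.lsum_sum f₂ hf₂1 hf₂2 hf₂3 (Finset.range (H.nL k))
        (fun j => H.sL (ρ (h * H.S (H.c1 k j))) * H.c2 k j)]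
    refine Finset.sum_congr rfl (fun j hj => ?_)
    rw [H.lsum_sL f₂ hf₂1 hf₂2 hf₂3 (ρ (h * H.S (H.c1 k j))) (H.c2 k j),
      H.hconv_def, Finset.mul_sum]
    refine Finset.sum_congr rfl (fun s hs => ?_)
    simp only [hf₂def]
    rw [← mul_assoc, ← H.commL, mul_assoc]
  -- RHS
  have hRHS : H.hconv ρ h (H.hconv ρ k m) =
      ∑ j ∈ Finset.range (H.nL k),
        H.sL (ρ (h * H.S (H.c1 k j))) * H.hconv ρ (H.c2 k j) m := by
    rw [H.hconv_formB i hri hnd₁ hnd₂ ρ hρ_add hρ_lin hρ h (H.hconv ρ k m),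
      show (∑ j ∈ Finset.range (H.nL (H.hconv ρ k m)),
        H.sL (ρ (h * H.S (H.c1 (H.hconv ρ k m) j))) * H.c2 (H.hconv ρ k m) j) =
        ∑ j ∈ Finset.range (H.nL (H.hconv ρ k m)),
          f₀ (H.c1 (H.hconv ρ k m) j) (H.c2 (H.hconv ρ k m) j) from rfl,
      H.hconv_def ρ k m,
      H.lsum_sum f₀ hf₀1 hf₀2 hf₀3 (Finset.range (H.nL k))
        (fun t => H.tL (ρ (H.c2 k t * H.S m)) * H.c1 k t)]
    set g : A → A → A → A := fun u v w =>
      H.sL (ρ (h * H.S u)) * (H.tL (ρ (w * H.S m)) * v) with hgdef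
    have hco := H.comulL_coassoc g
      (fun u u' v w => by
        simp only [hgdef, H.S_add, mul_add, hρ_add, H.sL_add, add_mul])
      (fun u v v' w => by simp only [hgdef, mul_add])
      (fun u v w w' => by simp only [hgdef, add_mul, hρ_add, H.tL_add, mul_add])
      (fun l u v w => by
        simp only [hgdef]
        rw [H.S_mul_tL_left, ← mul_assoc (h), hsL, H.sL_mul]
        rw [mul_assoc]
        congr 1
        rw [← mul_assoc, H.commL, mul_assoc])
      (fun l u v w => by
        simp only [hgdef]
        congr 1
        rw [mul_assoc (H.sL l), hρ_lin, H.tL_mul, mul_assoc])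
      k
    calc (∑ t ∈ Finset.range (H.nL k),
            ∑ s ∈ Finset.range (H.nL (H.tL (ρ (H.c2 k t * H.S m)) * H.c1 k t)),
              f₀ (H.c1 (H.tL (ρ (H.c2 k t * H.S m)) * H.c1 k t) s)
                (H.c2 (H.tL (ρ (H.c2 k t * H.S m)) * H.c1 k t) s))
        = ∑ t ∈ Finset.range (H.nL k), ∑ s ∈ Finset.range (H.nL (H.c1 k t)),
            g (H.c1 (H.c1 k t) s) (H.c2 (H.c1 k t) s) (H.c2 k t) := by
          refine Finset.sum_congr rfl (fun t ht => ?_)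
          rw [H.lsum_tL f₀ hf₀1 hf₀2 hf₀3 (ρ (H.c2 k t * H.S m)) (H.c1 k t)]
      _ = ∑ t ∈ Finset.range (H.nL k), ∑ s ∈ Finset.range (H.nL (H.c2 k t)),
            g (H.c1 k t) (H.c1 (H.c2 k t) s) (H.c2 (H.c2 k t) s) := hco
      _ = ∑ t ∈ Finset.range (H.nL k),
            H.sL (ρ (h * H.S (H.c1 k t))) * H.hconv ρ (H.c2 k t) m := by
          refine Finset.sum_congr rfl (fun t ht => ?_)
          rw [H.hconv_def, Finset.mul_sum]
  rw [hLHS, hRHS]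

end Claims

end HopfAlgebroidData
namespace HopfAlgebroidData

variable {A L R : Type u} [Ring A] [Ring L] [Ring R] (H : HopfAlgebroidData A L R)

section Claims2

set_option linter.unusedSectionVars false

variable (i : A) (hri : ∀ a, i * a = i * H.sR (H.πR a))
  (hnd₁ : Function.Bijective (H.intMapL i))
  (hnd₂ : Function.Bijective (H.intMapR i))
  (ρ : A → L) (hρ_add : ∀ x y, ρ (x + y) = ρ x + ρ y)
  (hρ_lin : ∀ l x, ρ (H.sL l * x) = l * ρ x)
  (hρ : (∑ k ∈ Finset.range (H.nL i), H.tL (ρ (H.c2 i k)) * H.c1 i k) = 1)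

include hri hnd₁ hnd₂ hρ_add hρ_lin hρ

/-- Claim 6a: `γ_R(h ∗ k) = h⁽¹⁾ ⊗ (h⁽²⁾ ∗ k)`. -/
lemma claim_frob1 {M : Type u} [AddCommGroup M] (f : A → A → M)
    (hf1 : ∀ u u' v, f (u + u') v = f u v + f u' v)
    (hf2 : ∀ u v v', f u (v + v') = f u v + f u v')
    (hf3 : ∀ r u v, f (u * H.sR r) v = f u (v * H.tR r))
    (h k : A) :
    (∑ j ∈ Finset.range (H.nR (H.hconv ρ h k)),
      f (H.d1 (H.hconv ρ h k) j) (H.d2 (H.hconv ρ h k) j)) =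
    ∑ j ∈ Finset.range (H.nR h), f (H.d1 h j) (H.hconv ρ (H.d2 h j) k) := by
  set g : A → A → A → M := fun u v w => f u (H.tL (ρ (w * H.S k)) * v) with hgdef
  have hmix := H.mixed₂ g
    (fun u u' v w => by simp only [hgdef, hf1])
    (fun u v v' w => by simp only [hgdef, mul_add, hf2])
    (fun u v w w' => by simp only [hgdef, add_mul, hρ_add, H.tL_add, add_mul, hf2])
    (fun r u v w => by
      simp only [hgdef]
      rw [hf3, mul_assoc])
    (fun l u v w => by
      simp only [hgdef]
      congr 1
      rw [mul_assoc (H.sL l), hρ_lin, H.tL_mul, mul_assoc])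
    h
  calc (∑ j ∈ Finset.range (H.nR (H.hconv ρ h k)),
          f (H.d1 (H.hconv ρ h k) j) (H.d2 (H.hconv ρ h k) j))
      = ∑ j ∈ Finset.range (H.nL h), ∑ p ∈ Finset.range (H.nR (H.c1 h j)),
          g (H.d1 (H.c1 h j) p) (H.d2 (H.c1 h j) p) (H.c2 h j) := by
        rw [H.hconv_def,
          H.rsum_sum f hf1 hf2 hf3 (Finset.range (H.nL h))
            (fun j => H.tL (ρ (H.c2 h j * H.S k)) * H.c1 h j)]
        refine Finset.sum_congr rfl (fun j hj => ?_)
        rw [H.rsum_tL_left f hf1 hf2 hf3 (ρ (H.c2 h j * H.S k)) (H.c1 h j)]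
    _ = ∑ p ∈ Finset.range (H.nR h), ∑ j ∈ Finset.range (H.nL (H.d2 h p)),
          g (H.d1 h p) (H.c1 (H.d2 h p) j) (H.c2 (H.d2 h p) j) := hmix
    _ = ∑ p ∈ Finset.range (H.nR h), f (H.d1 h p) (H.hconv ρ (H.d2 h p) k) := by
        refine Finset.sum_congr rfl (fun p hp => ?_)
        rw [H.hconv_def, addf_sum (f := f (H.d1 h p)) (fun v v' => hf2 _ v v')]

/-- Claim 6b: `γ_R(h ∗ k) = (h ∗ k⁽¹⁾) ⊗ k⁽²⁾`. -/
lemma claim_frob2 {M : Type u} [AddCommGroup M] (f : A → A → M)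
    (hf1 : ∀ u u' v, f (u + u') v = f u v + f u' v)
    (hf2 : ∀ u v v', f u (v + v') = f u v + f u v')
    (hf3 : ∀ r u v, f (u * H.sR r) v = f u (v * H.tR r))
    (h k : A) :
    (∑ j ∈ Finset.range (H.nR (H.hconv ρ h k)),
      f (H.d1 (H.hconv ρ h k) j) (H.d2 (H.hconv ρ h k) j)) =
    ∑ j ∈ Finset.range (H.nR k), f (H.hconv ρ h (H.d1 k j)) (H.d2 k j) := by
  have hsL : ∀ l x, ρ (x * H.sL l) = ρ x * l := H.rho_sL i hnd₁ ρ hρ_add hρ_lin hρ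
  set g : A → A → A → M := fun u v w => f (H.sL (ρ (h * H.S u)) * v) w with hgdef
  have hmix := H.mixed₁ g
    (fun u u' v w => by
      simp only [hgdef, H.S_add, mul_add, hρ_add, H.sL_add, add_mul, hf1])
    (fun u v v' w => by simp only [hgdef, mul_add, hf1])
    (fun u v w w' => by simp only [hgdef, hf2])
    (fun l u v w => by
      simp only [hgdef]
      congr 1
      rw [H.S_mul_tL_left, ← mul_assoc (h), hsL, H.sL_mul, mul_assoc])
    (fun r u v w => by
      simp only [hgdef]
      rw [← mul_assoc, hf3])
    k
  calc (∑ j ∈ Finset.range (H.nR (H.hconv ρ h k)),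
          f (H.d1 (H.hconv ρ h k) j) (H.d2 (H.hconv ρ h k) j))
      = ∑ j ∈ Finset.range (H.nL k), ∑ q ∈ Finset.range (H.nR (H.c2 k j)),
          g (H.c1 k j) (H.d1 (H.c2 k j) q) (H.d2 (H.c2 k j) q) := by
        rw [H.hconv_formB i hri hnd₁ hnd₂ ρ hρ_add hρ_lin hρ h k,
          H.rsum_sum f hf1 hf2 hf3 (Finset.range (H.nL k))
            (fun j => H.sL (ρ (h * H.S (H.c1 k j))) * H.c2 k j)]
        refine Finset.sum_congr rfl (fun j hj => ?_)
        rw [H.rsum_sL_left f hf1 hf2 hf3 (ρ (h * H.S (H.c1 k j))) (H.c2 k j)]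
    _ = ∑ p ∈ Finset.range (H.nR k), ∑ t ∈ Finset.range (H.nL (H.d1 k p)),
          g (H.c1 (H.d1 k p) t) (H.c2 (H.d1 k p) t) (H.d2 k p) := hmix.symm
    _ = ∑ p ∈ Finset.range (H.nR k), f (H.hconv ρ h (H.d1 k p)) (H.d2 k p) := by
        refine Finset.sum_congr rfl (fun p hp => ?_)
        rw [H.hconv_formB i hri hnd₁ hnd₂ ρ hρ_add hρ_lin hρ h (H.d1 k p),
          ← addf_sum (f := fun x => f x (H.d2 k p)) (fun u u' => hf1 u u' _)]

/-- Claim 1: `∗` is a right `H`-module map. -/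
lemma claim_module (h k m : A) :
    (∑ j ∈ Finset.range (H.nR m),
      H.hconv ρ (h * H.d1 m j) (k * H.d2 m j)) = H.hconv ρ h k * m := by
  set g : A → A → A → A := fun u α β =>
    ∑ j ∈ Finset.range (H.nL h),
      H.tL (ρ (H.c2 h j * (α * H.S (k * β)))) * (H.c1 h j * u) with hgdef
  have hg1 : ∀ u u' α β, g (u + u') α β = g u α β + g u' α β := by
    intro u u' α β
    simp only [hgdef, mul_add, Finset.sum_add_distrib]
  have hg2 : ∀ u α α' β, g u (α + α') β = g u α β + g u α' β := by
    intro u α α' β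
    simp only [hgdef, add_mul, mul_add, hρ_add, H.tL_add, Finset.sum_add_distrib]
  have hg3 : ∀ u α β β', g u α (β + β') = g u α β + g u α β' := by
    intro u α β β'
    simp only [hgdef, mul_add, H.S_add, hρ_add, H.tL_add, add_mul, Finset.sum_add_distrib]
  have hgbal1 : ∀ l u α β, g (H.tL l * u) α β = g u (H.sL l * α) β := by
    intro l u α β
    simp only [hgdef]
    have htak := H.comulL_takeuchi
      (fun x y => H.tL (ρ (y * (α * H.S (k * β)))) * (x * u))
      (fun x x' v => by
        show H.tL _ * ((x + x') * u) = _
        rw [add_mul, mul_add])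
      (fun x v v' => by
        show H.tL (ρ ((v + v') * _)) * _ = _
        rw [add_mul, hρ_add, H.tL_add, add_mul])
      (fun l' x v => by
        show H.tL (ρ (v * (α * H.S (k * β)))) * ((H.tL l' * x) * u)
          = H.tL (ρ ((H.sL l' * v) * (α * H.S (k * β)))) * (x * u)
        rw [mul_assoc (H.sL l'), hρ_lin, H.tL_mul]
        simp only [mul_assoc]) l h
    calc (∑ j ∈ Finset.range (H.nL h),
            H.tL (ρ (H.c2 h j * (α * H.S (k * β)))) * (H.c1 h j * (H.tL l * u)))
        = ∑ j ∈ Finset.range (H.nL h),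
            H.tL (ρ (H.c2 h j * (α * H.S (k * β)))) * ((H.c1 h j * H.tL l) * u) := by
          simp only [mul_assoc]
      _ = ∑ j ∈ Finset.range (H.nL h),
            H.tL (ρ ((H.c2 h j * H.sL l) * (α * H.S (k * β)))) * (H.c1 h j * u) := htak
      _ = ∑ j ∈ Finset.range (H.nL h),
            H.tL (ρ (H.c2 h j * ((H.sL l * α) * H.S (k * β)))) * (H.c1 h j * u) := by
          simp only [mul_assoc]
  have hgbal2 : ∀ r u α β, g u (α * H.sR r) β = g u α (β * H.tR r) := by
    intro r u α β
    simp only [hgdef]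
    refine Finset.sum_congr rfl (fun j hj => ?_)
    rw [show k * (β * H.tR r) = (k * β) * H.tR r by rw [mul_assoc], H.S_mul_tR_right]
    congr 2
    simp only [mul_assoc]
  have hmix := H.mixed₁ g hg1 hg2 hg3 hgbal1 hgbal2 m
  -- LHS equals the mixed₁ LHS
  have hstepA : (∑ p ∈ Finset.range (H.nR m),
      H.hconv ρ (h * H.d1 m p) (k * H.d2 m p)) =
      ∑ p ∈ Finset.range (H.nR m), ∑ n ∈ Finset.range (H.nL (H.d1 m p)),
        g (H.c1 (H.d1 m p) n) (H.c2 (H.d1 m p) n) (H.d2 m p) := by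
    refine Finset.sum_congr rfl (fun p hp => ?_)
    rw [H.hconv_def]
    set fp : A → A → A := fun u v => H.tL (ρ (v * H.S (k * H.d2 m p))) * u with hfpdef
    have hmul := H.comulL_mul fp
      (fun u u' v => by simp only [hfpdef, mul_add])
      (fun u v v' => by simp only [hfpdef, add_mul, hρ_add, H.tL_add])
      (fun l u v => by
        simp only [hfpdef]
        rw [mul_assoc (H.sL l), hρ_lin, H.tL_mul, mul_assoc]) h (H.d1 m p)
    rw [show (∑ j ∈ Finset.range (H.nL (h * H.d1 m p)),
        H.tL (ρ (H.c2 (h * H.d1 m p) j * H.S (k * H.d2 m p))) * H.c1 (h * H.d1 m p) j) =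
        ∑ j ∈ Finset.range (H.nL (h * H.d1 m p)),
          fp (H.c1 (h * H.d1 m p) j) (H.c2 (h * H.d1 m p) j) from rfl, hmul,
      Finset.sum_comm]
    refine Finset.sum_congr rfl (fun n hn => ?_)
    simp only [hgdef, hfpdef]
    refine Finset.sum_congr rfl (fun j hj => ?_)
    simp only [mul_assoc]
  rw [hstepA, hmix]
  -- collapse: per j' ∈ nL m
  have hstepC : ∀ j' ∈ Finset.range (H.nL m),
      (∑ q ∈ Finset.range (H.nR (H.c2 m j')),
        g (H.c1 m j') (H.d1 (H.c2 m j') q) (H.d2 (H.c2 m j') q)) =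
      ∑ j ∈ Finset.range (H.nL h),
        H.tL (ρ (H.c2 h j * H.S k)) * (H.c1 h j * (H.tL (H.πL (H.c2 m j')) * H.c1 m j')) := by
    intro j' hj'
    simp only [hgdef]
    rw [Finset.sum_comm]
    have hinner : ∀ j ∈ Finset.range (H.nL h),
        (∑ q ∈ Finset.range (H.nR (H.c2 m j')),
          H.tL (ρ (H.c2 h j * (H.d1 (H.c2 m j') q * H.S (k * H.d2 (H.c2 m j') q)))) *
            (H.c1 h j * H.c1 m j')) =
        H.tL (ρ (H.c2 h j * (H.sL (H.πL (H.c2 m j')) * H.S k))) * (H.c1 h j * H.c1 m j') := by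
      intro j hj
      rw [← Finset.sum_mul, ← addf_sum (f := H.tL) H.tL_add,
        ← addf_sum (f := ρ) hρ_add, ← Finset.mul_sum, H.d1_S_mul (H.c2 m j') k]
    rw [Finset.sum_congr rfl hinner]
    -- takeuchi on h
    have htak := H.comulL_takeuchi
      (fun x y => H.tL (ρ (y * H.S k)) * (x * H.c1 m j'))
      (fun x x' v => by
        show H.tL _ * ((x + x') * _) = _
        rw [add_mul, mul_add])
      (fun x v v' => by
        show H.tL (ρ ((v + v') * _)) * _ = _
        rw [add_mul, hρ_add, H.tL_add, add_mul])
      (fun l' x v => by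
        show H.tL (ρ (v * H.S k)) * ((H.tL l' * x) * H.c1 m j')
          = H.tL (ρ ((H.sL l' * v) * H.S k)) * (x * H.c1 m j')
        rw [mul_assoc (H.sL l'), hρ_lin, H.tL_mul]
        simp only [mul_assoc]) (H.πL (H.c2 m j')) h
    calc (∑ j ∈ Finset.range (H.nL h),
            H.tL (ρ (H.c2 h j * (H.sL (H.πL (H.c2 m j')) * H.S k))) *
              (H.c1 h j * H.c1 m j'))
        = ∑ j ∈ Finset.range (H.nL h),
            H.tL (ρ ((H.c2 h j * H.sL (H.πL (H.c2 m j'))) * H.S k)) *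
              (H.c1 h j * H.c1 m j') := by
          simp only [mul_assoc]
      _ = ∑ j ∈ Finset.range (H.nL h),
            H.tL (ρ (H.c2 h j * H.S k)) * ((H.c1 h j * H.tL (H.πL (H.c2 m j'))) * H.c1 m j') :=
          htak.symm
      _ = ∑ j ∈ Finset.range (H.nL h),
            H.tL (ρ (H.c2 h j * H.S k)) *
              (H.c1 h j * (H.tL (H.πL (H.c2 m j')) * H.c1 m j')) := by
          simp only [mul_assoc]
  rw [Finset.sum_congr rfl hstepC, Finset.sum_comm]
  -- collapse the j'-sum with counitL_right
  calc (∑ j ∈ Finset.range (H.nL h), ∑ j' ∈ Finset.range (H.nL m),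
          H.tL (ρ (H.c2 h j * H.S k)) *
            (H.c1 h j * (H.tL (H.πL (H.c2 m j')) * H.c1 m j')))
      = ∑ j ∈ Finset.range (H.nL h),
          H.tL (ρ (H.c2 h j * H.S k)) * (H.c1 h j * m) := by
        refine Finset.sum_congr rfl (fun j hj => ?_)
        rw [← Finset.mul_sum, ← Finset.mul_sum, H.counitL_right m]
    _ = (∑ j ∈ Finset.range (H.nL h), H.tL (ρ (H.c2 h j * H.S k)) * H.c1 h j) * m := by
        rw [Finset.sum_mul]
        simp only [mul_assoc]
    _ = H.hconv ρ h k * m := by rw [H.hconv_def]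

end Claims2

end HopfAlgebroidData
/-- Let `H` be a Hopf algebroid with non-degenerate right integral `i`,
`ρ = {}_Li⁻¹(1)`, and define the convolution `h ∗ k = t_L(ρ(h₍₂₎ S k)) h₍₁₎` (the closed form
of `{}_Li({}_Li⁻¹(h)·{}_Li⁻¹(k))`) and `η : R → H, r ↦ i s_R(r)`.  Then
`(H_H, ∗, η, γ_R, π_R)` is a Frobenius algebra in the monoidal category `M_H` of right
`H`-modules: `∗` and `η` are right `H`-module maps, `(H_H, ∗, η)` is a monoid,
`(H_H, γ_R, π_R)` is a comonoid, and `γ_R(h ∗ k) = h⁽¹⁾ ⊗ (h⁽²⁾ ∗ k) = (h ∗ k⁽¹⁾) ⊗ k⁽²⁾`. -/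
theorem convolution_frobenius_algebra
    {A L R : Type u} [Ring A] [Ring L] [Ring R]
    (H : HopfAlgebroidData A L R) (i : A)
    -- `i` is a right integral
    (hri : ∀ a, i * a = i * H.sR (H.πR a))
    -- non-degeneracy of `i`
    (hnd₁ : Function.Bijective (H.intMapL i))
    (hnd₂ : Function.Bijective (H.intMapR i))
    -- `ρ = {}_Li⁻¹(1_H)`
    (ρ : A → L) (hρ_add : ∀ x y, ρ (x + y) = ρ x + ρ y)
    (hρ_lin : ∀ l x, ρ (H.sL l * x) = l * ρ x)
    (hρ : (∑ k ∈ Finset.range (H.nL i), H.tL (ρ (H.c2 i k)) * H.c1 i k) = 1) :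
    -- `∗` is a right `H`-module map `H ⊗ H → H` (diagonal right action via `γ_R`)
    (∀ h k m, (∑ j ∈ Finset.range (H.nR m),
        H.hconv ρ (h * H.d1 m j) (k * H.d2 m j)) = H.hconv ρ h k * m) ∧
    -- `η` is a right `H`-module map (`R` carrying the action `r·a = π_R(s_R(r) a)`)
    (∀ r a, H.heta i (H.πR (H.sR r * a)) = H.heta i r * a) ∧
    -- associativity of `∗`
    (∀ h k m, H.hconv ρ (H.hconv ρ h k) m = H.hconv ρ h (H.hconv ρ k m)) ∧
    -- unit laws: `h ∗ η(r) = h s_R(r)` and `η(r) ∗ h = h t_R(r)`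
    (∀ h r, H.hconv ρ h (H.heta i r) = h * H.sR r) ∧
    (∀ h r, H.hconv ρ (H.heta i r) h = h * H.tR r) ∧
    -- Frobenius compatibility `γ_R(h ∗ k) = h⁽¹⁾ ⊗ (h⁽²⁾ ∗ k) = (h ∗ k⁽¹⁾) ⊗ k⁽²⁾`
    (∀ (M : Type u) (_ : AddCommGroup M) (f : A → A → M),
      (∀ u u' v, f (u + u') v = f u v + f u' v) →
      (∀ u v v', f u (v + v') = f u v + f u v') →
      (∀ r u v, f (u * H.sR r) v = f u (v * H.tR r)) →
      ∀ h k,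
        (∑ j ∈ Finset.range (H.nR (H.hconv ρ h k)),
          f (H.d1 (H.hconv ρ h k) j) (H.d2 (H.hconv ρ h k) j)) =
        (∑ j ∈ Finset.range (H.nR h), f (H.d1 h j) (H.hconv ρ (H.d2 h j) k)) ∧
        (∑ j ∈ Finset.range (H.nR (H.hconv ρ h k)),
          f (H.d1 (H.hconv ρ h k) j) (H.d2 (H.hconv ρ h k) j)) =
        (∑ j ∈ Finset.range (H.nR k), f (H.hconv ρ h (H.d1 k j)) (H.d2 k j))) := by
  refine ⟨?_, ?_, ?_, ?_, ?_, ?_⟩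
  · exact fun h k m => H.claim_module i hri hnd₁ hnd₂ ρ hρ_add hρ_lin hρ h k m
  · exact fun r a => H.claim_eta i hri hnd₁ hnd₂ ρ hρ_add hρ_lin hρ r a
  · exact fun h k m => H.claim_assoc i hri hnd₁ hnd₂ ρ hρ_add hρ_lin hρ h k m
  · exact fun h r => H.claim_runit i hri hnd₁ hnd₂ ρ hρ_add hρ_lin hρ h r
  · exact fun h r => H.claim_lunit i hri hnd₁ hnd₂ ρ hρ_add hρ_lin hρ h r
  · intro M instM f hf1 hf2 hf3 h k
    letI := instM
    exact ⟨H.claim_frob1 i hri hnd₁ hnd₂ ρ hρ_add hρ_lin hρ f hf1 hf2 hf3 h k,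
      H.claim_frob2 i hri hnd₁ hnd₂ ρ hρ_add hρ_lin hρ f hf1 hf2 hf3 h k⟩
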